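/- arXiv:2307.06269 — 4 statements merged into one kernel-verified Lean document; each statement's English description precedes it below -/
import Mathlib

section
/- For each z ∈ {0,1}, any version ℓ_z of E[A | X, Z=z] satisfies ℓ_z(X) = E[A_z | σ(X)] = P(A_z = 1 | σ(X)) P-almost surely. -/
open MeasureTheory ProbabilityTheory

lemma intbdd {Ω : Type*} [MeasurableSpace Ω] {P : Measure Ω} [IsFiniteMeasure P]
    {f : Ω → ℝ} (hf : Measurable f) {C : ℝ} (hC : ∀ ω, |f ω| ≤ C) : Integrable f P :=
  ⟨hf.aestronglyMeasurable, HasFiniteIntegral.of_bounded (ae_of_all _ fun ω => by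
    simpa using hC ω)⟩

lemma real_aux1 (t : ℝ) : |t / (1 + t ^ 2)| ≤ 1 := by
  have h : (0:ℝ) < 1 + t ^ 2 := by positivity
  rw [abs_div, abs_of_pos h, div_le_one h]
  nlinarith [sq_nonneg (|t| - 1), sq_abs t]

lemma real_aux2 (t : ℝ) : |t * (t / (1 + t ^ 2))| ≤ 1 := by
  have h : (0:ℝ) < 1 + t ^ 2 := by positivity
  have e : t * (t / (1 + t ^ 2)) = t ^ 2 / (1 + t ^ 2) := by ring
  rw [e, abs_div, abs_of_pos h, div_le_one h, abs_of_nonneg (sq_nonneg t)]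
  nlinarith

lemma clamp_sign (y b : ℝ) (hb : b = 0 ∨ b = 1) :
    0 ≤ (max 0 (min 1 y) - b) * (y - max 0 (min 1 y)) := by
  rcases le_total y 0 with h | h
  · have h2 : max 0 (min 1 y) = 0 := by
      rw [min_eq_right (h.trans zero_le_one)]; exact max_eq_left h
    rw [h2]
    rcases hb with rfl | rfl <;> nlinarith
  · rcases le_total 1 y with h' | h'
    · have h2 : max 0 (min 1 y) = 1 := by
        rw [min_eq_left h']; exact max_eq_right zero_le_one
      rw [h2]
      rcases hb with rfl | rfl <;> nlinarith
    · have h2 : max 0 (min 1 y) = y := by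
        rw [min_eq_right h']; exact max_eq_right h
      rw [h2]; simp

lemma clamp_mem (y : ℝ) : 0 ≤ max 0 (min 1 y) ∧ max 0 (min 1 y) ≤ 1 :=
  ⟨le_max_left _ _, max_le zero_le_one (min_le_left _ _)⟩

lemma key_lemma {Ω : Type*} [m0 : MeasurableSpace Ω] {S : Type*} [mS : MeasurableSpace S]
    (P : Measure Ω) [IsProbabilityMeasure P]
    (X : Ω → S) (hX : Measurable X)
    (W : Ω → ℝ) (hW : Measurable W) (hW01 : ∀ ω, W ω = 0 ∨ W ω = 1)
    (B : Ω → ℝ) (hB : Measurable B) (hB01 : ∀ ω, B ω = 0 ∨ B ω = 1)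
    (A : Ω → ℝ) (hAW : ∀ ω, A ω * W ω = B ω * W ω)
    (q : S → ℝ) (hq : Measurable q) (ε : ℝ) (hε : 0 < ε)
    (hqbd : ∀ x, ε ≤ q x ∧ q x ≤ 1)
    (hVq : ∀ g : S → ℝ, Measurable g → (∃ C, ∀ x, |g x| ≤ C) →
      ∫ ω, W ω * g (X ω) ∂P = ∫ ω, q (X ω) * g (X ω) ∂P)
    (hUq : ∀ g : S → ℝ, Measurable g → (∃ C, ∀ x, |g x| ≤ C) →
      ∫ ω, W ω * B ω * g (X ω) ∂P = ∫ ω, q (X ω) * B ω * g (X ω) ∂P)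
    (l : S → ℝ) (hl : Measurable l)
    (hlv : ∀ g : S → ℝ, Measurable g → (∃ C, ∀ x, |g x| ≤ C) →
      ∫ ω, A ω * W ω * g (X ω) ∂P = ∫ ω, l (X ω) * W ω * g (X ω) ∂P) :
    ∀ᵐ ω ∂P, l (X ω) = (P[B | MeasurableSpace.comap X mS]) ω := by
  have hWb : ∀ ω, 0 ≤ W ω ∧ W ω ≤ 1 := fun ω => by
    rcases hW01 ω with h | h <;> rw [h] <;> norm_num
  have hBb : ∀ ω, 0 ≤ B ω ∧ B ω ≤ 1 := fun ω => by
    rcases hB01 ω with h | h <;> rw [h] <;> norm_num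
  set l' : S → ℝ := fun x => max 0 (min 1 (l x)) with hl'def
  have hl' : Measurable l' := measurable_const.max (measurable_const.min hl)
  set d : S → ℝ := fun x => l x - l' x with hddef
  have hd : Measurable d := hl.sub hl'
  set g₀ : S → ℝ := fun x => d x / (1 + d x ^ 2) with hg0def
  have hg₀ : Measurable g₀ := hd.div ((measurable_const.add (hd.pow_const 2)))
  have hg₀b : ∀ x, |g₀ x| ≤ 1 := fun x => real_aux1 (d x)
  have hdg₀b : ∀ x, |d x * g₀ x| ≤ 1 := fun x => real_aux2 (d x)
  set φ : S → ℝ := fun x => d x ^ 2 / (1 + d x ^ 2) with hφdef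
  have hφ : Measurable φ := (hd.pow_const 2).div (measurable_const.add (hd.pow_const 2))
  have hφb : ∀ x, 0 ≤ φ x ∧ φ x ≤ 1 := fun x => by
    have h : (0:ℝ) < 1 + d x ^ 2 := by positivity
    constructor
    · positivity
    · rw [div_le_one h]; nlinarith
  -- Step 1 : l (X ω) = l' (X ω) a.e.
  have hlgb : ∀ x, |l x * g₀ x| ≤ 2 := by
    intro x
    have e1 : l x * g₀ x = d x * g₀ x + l' x * g₀ x := by
      simp only [hddef]; ring
    calc |l x * g₀ x| ≤ |d x * g₀ x| + |l' x * g₀ x| := by rw [e1]; exact abs_add_le _ _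
    _ ≤ 1 + 1 := by
        refine add_le_add (hdg₀b x) ?_
        rw [abs_mul]
        have := clamp_mem (l x)
        have h1 : |l' x| ≤ 1 := abs_le.mpr ⟨by linarith [this.1], this.2⟩
        calc |l' x| * |g₀ x| ≤ 1 * 1 := by
              exact mul_le_mul h1 (hg₀b x) (abs_nonneg _) zero_le_one
        _ = 1 := by norm_num
    _ = 2 := by norm_num
  have int1 : Integrable (fun ω => l (X ω) * W ω * g₀ (X ω)) P := by
    refine intbdd (C := 2) ((hl.comp hX).mul hW |>.mul (hg₀.comp hX)) ?_
    intro ω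
    have e1 : l (X ω) * W ω * g₀ (X ω) = (l (X ω) * g₀ (X ω)) * W ω := by ring
    rw [e1, abs_mul]
    calc |l (X ω) * g₀ (X ω)| * |W ω| ≤ 2 * 1 := by
          refine mul_le_mul (hlgb _) ?_ (abs_nonneg _) (by norm_num)
          exact abs_le.mpr ⟨by linarith [(hWb ω).1], (hWb ω).2⟩
    _ = 2 := by norm_num
  have int2 : Integrable (fun ω => B ω * W ω * g₀ (X ω)) P := by
    refine intbdd (C := 1) ((hB.mul hW).mul (hg₀.comp hX)) ?_
    intro ω
    rw [abs_mul, abs_mul]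
    have h1 : |B ω| ≤ 1 := abs_le.mpr ⟨by linarith [(hBb ω).1], (hBb ω).2⟩
    have h2 : |W ω| ≤ 1 := abs_le.mpr ⟨by linarith [(hWb ω).1], (hWb ω).2⟩
    calc |B ω| * |W ω| * |g₀ (X ω)| ≤ 1 * 1 * 1 := by
          refine mul_le_mul (mul_le_mul h1 h2 (abs_nonneg _) zero_le_one)
            (hg₀b _) (abs_nonneg _) (by norm_num)
    _ = 1 := by norm_num
  have h0 := hlv g₀ hg₀ ⟨1, hg₀b⟩
  have h0' : ∫ ω, B ω * W ω * g₀ (X ω) ∂P = ∫ ω, l (X ω) * W ω * g₀ (X ω) ∂P := by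
    rw [← h0]
    exact integral_congr_ae (ae_of_all _ fun ω => by simp only; rw [← hAW ω])
  set F : Ω → ℝ := fun ω => (l (X ω) - B ω) * W ω * g₀ (X ω) with hFdef
  have hFint : Integrable F P := by
    have e1 : F = fun ω => l (X ω) * W ω * g₀ (X ω) - B ω * W ω * g₀ (X ω) := by
      funext ω; simp only [hFdef]; ring
    rw [e1]; exact int1.sub int2
  have hF0 : ∫ ω, F ω ∂P = 0 := by
    have e1 : F = fun ω => l (X ω) * W ω * g₀ (X ω) - B ω * W ω * g₀ (X ω) := by
      funext ω; simp only [hFdef]; ring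
    rw [e1, integral_sub int1 int2, ← h0', sub_self]
  have hFge : ∀ ω, W ω * φ (X ω) ≤ F ω := by
    intro ω
    rcases hW01 ω with h | h
    · simp [hFdef, h]
    · rw [hFdef]
      simp only [h, mul_one, one_mul]
      have hpos : (0:ℝ) < 1 + d (X ω) ^ 2 := by positivity
      have e1 : (l (X ω) - B ω) * g₀ (X ω) - φ (X ω)
          = ((l' (X ω) - B ω) * d (X ω)) / (1 + d (X ω) ^ 2) := by
        simp only [hg0def, hφdef, hddef]
        field_simp
        ring
      have hnum : 0 ≤ (l' (X ω) - B ω) * d (X ω) := clamp_sign (l (X ω)) (B ω) (hB01 ω)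
      nlinarith [div_nonneg hnum hpos.le]
  have intWφ : Integrable (fun ω => W ω * φ (X ω)) P := by
    refine intbdd (C := 1) (hW.mul (hφ.comp hX)) fun ω => ?_
    rw [abs_mul]
    have h2 : |W ω| ≤ 1 := abs_le.mpr ⟨by linarith [(hWb ω).1], (hWb ω).2⟩
    have h3 : |φ (X ω)| ≤ 1 := abs_le.mpr ⟨by linarith [(hφb (X ω)).1], (hφb (X ω)).2⟩
    calc |W ω| * |φ (X ω)| ≤ 1 * 1 :=
          mul_le_mul h2 h3 (abs_nonneg _) zero_le_one
    _ = 1 := by norm_num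
  have hle : ∫ ω, W ω * φ (X ω) ∂P ≤ 0 := by
    rw [← hF0]; exact integral_mono intWφ hFint hFge
  have hqφ := hVq φ hφ ⟨1, fun x => abs_le.mpr ⟨by linarith [(hφb x).1], (hφb x).2⟩⟩
  have hqφnn : ∀ ω, 0 ≤ q (X ω) * φ (X ω) := fun ω =>
    mul_nonneg (by linarith [(hqbd (X ω)).1]) (hφb (X ω)).1
  have intqφ : Integrable (fun ω => q (X ω) * φ (X ω)) P := by
    refine intbdd (C := 1) ((hq.comp hX).mul (hφ.comp hX)) fun ω => ?_
    rw [abs_mul]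
    have h2 : |q (X ω)| ≤ 1 := abs_le.mpr ⟨by linarith [(hqbd (X ω)).1], (hqbd (X ω)).2⟩
    have h3 : |φ (X ω)| ≤ 1 := abs_le.mpr ⟨by linarith [(hφb (X ω)).1], (hφb (X ω)).2⟩
    calc |q (X ω)| * |φ (X ω)| ≤ 1 * 1 :=
          mul_le_mul h2 h3 (abs_nonneg _) zero_le_one
    _ = 1 := by norm_num
  have hqφ0 : ∫ ω, q (X ω) * φ (X ω) ∂P = 0 :=
    le_antisymm (hqφ ▸ hle) (integral_nonneg hqφnn)
  have hae0 : ∀ᵐ ω ∂P, q (X ω) * φ (X ω) = 0 := by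
    have := (integral_eq_zero_iff_of_nonneg hqφnn intqφ).mp hqφ0
    filter_upwards [this] with ω hω
    exact hω
  have hcl : ∀ᵐ ω ∂P, l (X ω) = l' (X ω) := by
    filter_upwards [hae0] with ω hω
    have hq0 : q (X ω) ≠ 0 := by linarith [(hqbd (X ω)).1]
    have hφ0 : φ (X ω) = 0 := by
      rcases mul_eq_zero.mp hω with h | h
      · exact absurd h hq0
      · exact h
    have hd0 : d (X ω) = 0 := by
      have hpos : (0:ℝ) < 1 + d (X ω) ^ 2 := by positivity
      have h2 : d (X ω) ^ 2 / (1 + d (X ω) ^ 2) = 0 := hφ0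
      have h3 : d (X ω) ^ 2 = 0 := by
        rcases div_eq_zero_iff.mp h2 with h | h
        · exact h
        · linarith
      exact pow_eq_zero_iff (n := 2) (by norm_num) |>.mp h3
    have := hd0
    rw [hddef] at this
    linarith [sub_eq_zero.mp this]
  -- Step 2: ∀ bounded measurable g, ∫ B g(X) = ∫ l'(X) g(X)
  have step2 : ∀ g : S → ℝ, Measurable g → (∃ C, ∀ x, |g x| ≤ C) →
      ∫ ω, B ω * g (X ω) ∂P = ∫ ω, l' (X ω) * g (X ω) ∂P := by
    intro g hg hgb
    obtain ⟨C, hC⟩ := hgb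
    have hC' : ∀ x, |g x| ≤ max C 0 := fun x => le_trans (hC x) (le_max_left _ _)
    have hC0 : (0:ℝ) ≤ max C 0 := le_max_right _ _
    set g2 : S → ℝ := fun x => g x / q x with hg2def
    have hg2 : Measurable g2 := hg.div hq
    have hg2b : ∀ x, |g2 x| ≤ max C 0 / ε := by
      intro x
      have hqx := hqbd x
      rw [hg2def]
      simp only
      rw [abs_div, abs_of_pos (by linarith : (0:ℝ) < q x)]
      exact div_le_div₀ hC0 (hC' x) hε (by linarith)
    have e1 : ∀ ω, B ω * g (X ω) = q (X ω) * B ω * g2 (X ω) := by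
      intro ω
      have hq0 : q (X ω) ≠ 0 := by linarith [(hqbd (X ω)).1]
      rw [hg2def]
      field_simp
    have e2 : ∀ ω, q (X ω) * (l' (X ω) * g2 (X ω)) = l' (X ω) * g (X ω) := by
      intro ω
      have hq0 : q (X ω) ≠ 0 := by linarith [(hqbd (X ω)).1]
      rw [hg2def]
      field_simp
      try ring
    calc ∫ ω, B ω * g (X ω) ∂P = ∫ ω, q (X ω) * B ω * g2 (X ω) ∂P :=
          integral_congr_ae (ae_of_all _ fun ω => e1 ω)
    _ = ∫ ω, W ω * B ω * g2 (X ω) ∂P := (hUq g2 hg2 ⟨max C 0 / ε, hg2b⟩).symm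
    _ = ∫ ω, A ω * W ω * g2 (X ω) ∂P :=
          integral_congr_ae (ae_of_all _ fun ω => by simp only; rw [mul_comm (W ω) (B ω), ← hAW ω])
    _ = ∫ ω, l (X ω) * W ω * g2 (X ω) ∂P := hlv g2 hg2 ⟨max C 0 / ε, hg2b⟩
    _ = ∫ ω, l' (X ω) * W ω * g2 (X ω) ∂P := by
          refine integral_congr_ae ?_
          filter_upwards [hcl] with ω hω
          rw [hω]
    _ = ∫ ω, W ω * ((fun x => l' x * g2 x) (X ω)) ∂P :=
          integral_congr_ae (ae_of_all _ fun ω =>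
            (by ring : l' (X ω) * W ω * g2 (X ω) = W ω * (l' (X ω) * g2 (X ω))))
    _ = ∫ ω, q (X ω) * ((fun x => l' x * g2 x) (X ω)) ∂P := by
          refine hVq (fun x => l' x * g2 x) (hl'.mul hg2) ⟨1 * (max C 0 / ε), fun x => ?_⟩
          simp only [abs_mul]
          refine mul_le_mul ?_ (hg2b x) (abs_nonneg _) zero_le_one
          have := clamp_mem (l x)
          exact abs_le.mpr ⟨by linarith [this.1], this.2⟩
    _ = ∫ ω, l' (X ω) * g (X ω) ∂P :=
          integral_congr_ae (ae_of_all _ fun ω => e2 ω)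
  -- Step 3: condexp characterization
  have hm : MeasurableSpace.comap X mS ≤ m0 := hX.comap_le
  haveI : SigmaFinite (P.trim hm) := by
    haveI : IsFiniteMeasure (P.trim hm) := isFiniteMeasure_trim hm
    infer_instance
  have hl'Xb : ∀ ω, |l' (X ω)| ≤ 1 := fun ω => by
    have := clamp_mem (l (X ω))
    exact abs_le.mpr ⟨by linarith [this.1], this.2⟩
  have intl'X : Integrable (fun ω => l' (X ω)) P := intbdd (hl'.comp hX) hl'Xb
  have hXm : Measurable[MeasurableSpace.comap X mS] X := fun s hs => ⟨s, hs, rfl⟩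
  have hmain : (fun ω => l' (X ω)) =ᵐ[P] P[B | MeasurableSpace.comap X mS] := by
    refine ae_eq_condExp_of_forall_setIntegral_eq hm
      (intbdd hB fun ω => abs_le.mpr ⟨by linarith [(hBb ω).1], (hBb ω).2⟩)
      (fun s _ _ => intl'X.integrableOn) ?_ ?_
    · rintro s ⟨t, ht, rfl⟩ -
      set gt : S → ℝ := t.indicator (fun _ => 1) with hgtdef
      have hgt : Measurable gt := measurable_const.indicator ht
      have hgtb : ∀ x, |gt x| ≤ 1 := fun x => by
        rw [hgtdef]
        by_cases hx : x ∈ t <;> simp [Set.indicator, hx]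
      have hind : ∀ (f : Ω → ℝ), ∫ ω in X ⁻¹' t, f ω ∂P
          = ∫ ω, f ω * gt (X ω) ∂P := by
        intro f
        rw [← integral_indicator (hX ht)]
        refine integral_congr_ae (ae_of_all _ fun ω => ?_)
        by_cases hx : X ω ∈ t <;> simp [Set.indicator, hx, hgtdef]
      rw [hind (fun ω => l' (X ω)), hind B, step2 gt hgt ⟨1, hgtb⟩]
    · exact StronglyMeasurable.aestronglyMeasurable
        ((hl'.comp hXm).stronglyMeasurable)
  filter_upwards [hcl, hmain] with ω h1 h2
  rw [h1]
  exact h2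
/-- For each z ∈ {0,1}, any version ℓ_z of E[A | X, Z=z] satisfies
ℓ_z(X) = E[A_z | σ(X)] = P(A_z = 1 | σ(X)) P-almost surely. -/
theorem stmt_1
    {Ω : Type*} [MeasurableSpace Ω] (P : Measure Ω) [IsProbabilityMeasure P]
    {S : Type*} [mS : MeasurableSpace S]
    (X : Ω → S) (hX : Measurable X)
    (Z A0 A1 Y0 Y1 : Ω → ℝ)
    (hZ : Measurable Z) (hA0 : Measurable A0) (hA1 : Measurable A1)
    (hY0 : Measurable Y0) (hY1 : Measurable Y1)
    (hZ01 : ∀ ω, Z ω = 0 ∨ Z ω = 1)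
    (hA0_01 : ∀ ω, A0 ω = 0 ∨ A0 ω = 1)
    (hA1_01 : ∀ ω, A1 ω = 0 ∨ A1 ω = 1)
    (hY0b : ∃ C, ∀ ω, |Y0 ω| ≤ C) (hY1b : ∃ C, ∀ ω, |Y1 ω| ≤ C)
    (A Y : Ω → ℝ)
    (hA : A = fun ω => (1 - Z ω) * A0 ω + Z ω * A1 ω)
    (hY : Y = fun ω => (1 - A ω) * Y0 ω + A ω * Y1 ω)
    -- positivity: e∘X is a version of E[Z | σ(X)] with ε ≤ e ≤ 1 - ε
    (e : S → ℝ) (he : Measurable e) (ε : ℝ) (hε : 0 < ε) (hε2 : ε < 1/2)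
    (hebd : ∀ x, ε ≤ e x ∧ e x ≤ 1 - ε)
    (hVe : ∀ g : S → ℝ, Measurable g → (∃ C, ∀ x, |g x| ≤ C) →
      ∫ ω, Z ω * g (X ω) ∂P = ∫ ω, e (X ω) * g (X ω) ∂P)
    -- unconfoundedness: Z ⫫ (A0,A1,Y0,Y1) | σ(X)
    (hUnconf : ∀ ψ : ℝ × ℝ × ℝ × ℝ → ℝ, Measurable ψ → (∃ C, ∀ v, |ψ v| ≤ C) →
      ∀ g : S → ℝ, Measurable g → (∃ C, ∀ x, |g x| ≤ C) →
      ∫ ω, Z ω * ψ (A0 ω, A1 ω, Y0 ω, Y1 ω) * g (X ω) ∂P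
        = ∫ ω, e (X ω) * ψ (A0 ω, A1 ω, Y0 ω, Y1 ω) * g (X ω) ∂P)
    -- ℓ_z is a version of E[A | X, Z = z], for z = 0, 1
    (l0 l1 : S → ℝ) (hl0 : Measurable l0) (hl1 : Measurable l1)
    (hl0v : ∀ g : S → ℝ, Measurable g → (∃ C, ∀ x, |g x| ≤ C) →
      ∫ ω, A ω * (if Z ω = 0 then (1:ℝ) else 0) * g (X ω) ∂P
        = ∫ ω, l0 (X ω) * (if Z ω = 0 then (1:ℝ) else 0) * g (X ω) ∂P)
    (hl1v : ∀ g : S → ℝ, Measurable g → (∃ C, ∀ x, |g x| ≤ C) →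
      ∫ ω, A ω * (if Z ω = 1 then (1:ℝ) else 0) * g (X ω) ∂P
        = ∫ ω, l1 (X ω) * (if Z ω = 1 then (1:ℝ) else 0) * g (X ω) ∂P) :
    (∀ᵐ ω ∂P, l0 (X ω) = (P[A0 | MeasurableSpace.comap X mS]) ω
      ∧ (P[A0 | MeasurableSpace.comap X mS]) ω
        = (P[fun ω' => (if A0 ω' = 1 then (1:ℝ) else 0) | MeasurableSpace.comap X mS]) ω)
    ∧ (∀ᵐ ω ∂P, l1 (X ω) = (P[A1 | MeasurableSpace.comap X mS]) ω
      ∧ (P[A1 | MeasurableSpace.comap X mS]) ω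
        = (P[fun ω' => (if A1 ω' = 1 then (1:ℝ) else 0) | MeasurableSpace.comap X mS]) ω) := by
  -- indicator = variable itself, for {0,1}-valued functions
  have hZif1 : ∀ ω, (if Z ω = 1 then (1:ℝ) else 0) = Z ω := fun ω => by
    rcases hZ01 ω with h | h <;> simp [h]
  have hZif0 : ∀ ω, (if Z ω = 0 then (1:ℝ) else 0) = 1 - Z ω := fun ω => by
    rcases hZ01 ω with h | h <;> simp [h]
  have hfun0 : (fun ω' => if A0 ω' = 1 then (1:ℝ) else 0) = A0 :=
    funext fun ω => by rcases hA0_01 ω with h | h <;> simp [h]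
  have hfun1 : (fun ω' => if A1 ω' = 1 then (1:ℝ) else 0) = A1 :=
    funext fun ω => by rcases hA1_01 ω with h | h <;> simp [h]
  -- bounded test functions for unconfoundedness
  have clamp_absb : ∀ t : ℝ, |max 0 (min 1 t)| ≤ 1 := fun t =>
    abs_le.mpr ⟨le_trans (by norm_num) (le_max_left _ _),
      max_le zero_le_one (min_le_left _ _)⟩
  -- unconfoundedness specialized to A1
  have hU1 : ∀ g : S → ℝ, Measurable g → (∃ C, ∀ x, |g x| ≤ C) →
      ∫ ω, Z ω * A1 ω * g (X ω) ∂P = ∫ ω, e (X ω) * A1 ω * g (X ω) ∂P := by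
    intro g hg hgb
    have hψm : Measurable (fun v : ℝ × ℝ × ℝ × ℝ => max 0 (min 1 v.2.1)) := by
      fun_prop
    have hψA : ∀ ω, max 0 (min 1 (A1 ω)) = A1 ω := fun ω => by
      rcases hA1_01 ω with h | h <;> simp [h]
    have := hUnconf (fun v => max 0 (min 1 v.2.1)) hψm ⟨1, fun v => clamp_absb _⟩ g hg hgb
    simp only [hψA] at this
    exact this
  -- unconfoundedness specialized to A0
  have hU0 : ∀ g : S → ℝ, Measurable g → (∃ C, ∀ x, |g x| ≤ C) →
      ∫ ω, Z ω * A0 ω * g (X ω) ∂P = ∫ ω, e (X ω) * A0 ω * g (X ω) ∂P := by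
    intro g hg hgb
    have hψm : Measurable (fun v : ℝ × ℝ × ℝ × ℝ => max 0 (min 1 v.1)) := by
      fun_prop
    have hψA : ∀ ω, max 0 (min 1 (A0 ω)) = A0 ω := fun ω => by
      rcases hA0_01 ω with h | h <;> simp [h]
    have := hUnconf (fun v => max 0 (min 1 v.1)) hψm ⟨1, fun v => clamp_absb _⟩ g hg hgb
    simp only [hψA] at this
    exact this
  -- case z = 1
  have hAW1 : ∀ ω, A ω * Z ω = A1 ω * Z ω := fun ω => by
    rcases hZ01 ω with h | h <;> simp [hA, h]
  have hqbd1 : ∀ x, ε ≤ e x ∧ e x ≤ 1 := fun x =>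
    ⟨(hebd x).1, by linarith [(hebd x).2]⟩
  have hlv1 : ∀ g : S → ℝ, Measurable g → (∃ C, ∀ x, |g x| ≤ C) →
      ∫ ω, A ω * Z ω * g (X ω) ∂P = ∫ ω, l1 (X ω) * Z ω * g (X ω) ∂P := by
    intro g hg hgb
    have := hl1v g hg hgb
    simp only [hZif1] at this
    exact this
  have key1 := key_lemma P X hX Z hZ hZ01 A1 hA1 hA1_01 A hAW1
    e he ε hε hqbd1 hVe hU1 l1 hl1 hlv1
  -- case z = 0
  have hW001 : ∀ ω, (1 - Z ω) = 0 ∨ (1 - Z ω) = 1 := fun ω => by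
    rcases hZ01 ω with h | h
    · right; rw [h]; ring
    · left; rw [h]; ring
  have hAW0 : ∀ ω, A ω * (1 - Z ω) = A0 ω * (1 - Z ω) := fun ω => by
    rcases hZ01 ω with h | h <;> simp [hA, h]
  have hqbd0 : ∀ x, ε ≤ 1 - e x ∧ 1 - e x ≤ 1 := fun x =>
    ⟨by linarith [(hebd x).2], by linarith [(hebd x).1]⟩
  -- helper integrability
  have ibdd : ∀ (f : Ω → ℝ), Measurable f → ∀ C : ℝ, (∀ ω, |f ω| ≤ C) →
      Integrable f P := fun f hf C hC => intbdd hf hC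
  have hZabs : ∀ ω, |Z ω| ≤ 1 := fun ω => by
    rcases hZ01 ω with h | h <;> rw [h] <;> norm_num
  have hA0abs : ∀ ω, |A0 ω| ≤ 1 := fun ω => by
    rcases hA0_01 ω with h | h <;> rw [h] <;> norm_num
  have heabs : ∀ x, |e x| ≤ 1 := fun x =>
    abs_le.mpr ⟨by linarith [(hebd x).1], by linarith [(hebd x).2]⟩
  have hVq0 : ∀ g : S → ℝ, Measurable g → (∃ C, ∀ x, |g x| ≤ C) →
      ∫ ω, (1 - Z ω) * g (X ω) ∂P = ∫ ω, (1 - e (X ω)) * g (X ω) ∂P := by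
    intro g hg hgb
    obtain ⟨C, hC⟩ := hgb
    have i1 : Integrable (fun ω => g (X ω)) P :=
      ibdd _ (hg.comp hX) C (fun ω => hC (X ω))
    have i2 : Integrable (fun ω => Z ω * g (X ω)) P := by
      refine ibdd _ (hZ.mul (hg.comp hX)) C fun ω => ?_
      rw [abs_mul]
      calc |Z ω| * |g (X ω)| ≤ 1 * C :=
            mul_le_mul (hZabs ω) (hC _) (abs_nonneg _) zero_le_one
      _ = C := by ring
    have i3 : Integrable (fun ω => e (X ω) * g (X ω)) P := by
      refine ibdd _ ((he.comp hX).mul (hg.comp hX)) C fun ω => ?_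
      rw [abs_mul]
      calc |e (X ω)| * |g (X ω)| ≤ 1 * C :=
            mul_le_mul (heabs _) (hC _) (abs_nonneg _) zero_le_one
      _ = C := by ring
    calc ∫ ω, (1 - Z ω) * g (X ω) ∂P
        = ∫ ω, (g (X ω) - Z ω * g (X ω)) ∂P :=
          integral_congr_ae (ae_of_all _ fun ω => by ring)
    _ = ∫ ω, g (X ω) ∂P - ∫ ω, Z ω * g (X ω) ∂P := integral_sub i1 i2
    _ = ∫ ω, g (X ω) ∂P - ∫ ω, e (X ω) * g (X ω) ∂P := by
          rw [hVe g hg ⟨C, hC⟩]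
    _ = ∫ ω, (g (X ω) - e (X ω) * g (X ω)) ∂P := (integral_sub i1 i3).symm
    _ = ∫ ω, (1 - e (X ω)) * g (X ω) ∂P :=
          integral_congr_ae (ae_of_all _ fun ω => by ring)
  have hUq0 : ∀ g : S → ℝ, Measurable g → (∃ C, ∀ x, |g x| ≤ C) →
      ∫ ω, (1 - Z ω) * A0 ω * g (X ω) ∂P
        = ∫ ω, (1 - e (X ω)) * A0 ω * g (X ω) ∂P := by
    intro g hg hgb
    obtain ⟨C, hC⟩ := hgb
    have i1 : Integrable (fun ω => A0 ω * g (X ω)) P := by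
      refine ibdd _ (hA0.mul (hg.comp hX)) C fun ω => ?_
      rw [abs_mul]
      calc |A0 ω| * |g (X ω)| ≤ 1 * C :=
            mul_le_mul (hA0abs ω) (hC _) (abs_nonneg _) zero_le_one
      _ = C := by ring
    have i2 : Integrable (fun ω => Z ω * A0 ω * g (X ω)) P := by
      refine ibdd _ ((hZ.mul hA0).mul (hg.comp hX)) C fun ω => ?_
      have e1 : Z ω * A0 ω * g (X ω) = Z ω * (A0 ω * g (X ω)) := by ring
      rw [e1, abs_mul]
      calc |Z ω| * |A0 ω * g (X ω)| ≤ 1 * C := by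
            refine mul_le_mul (hZabs ω) ?_ (abs_nonneg _) zero_le_one
            rw [abs_mul]
            calc |A0 ω| * |g (X ω)| ≤ 1 * C :=
                  mul_le_mul (hA0abs ω) (hC _) (abs_nonneg _) zero_le_one
            _ = C := by ring
      _ = C := by ring
    have i3 : Integrable (fun ω => e (X ω) * A0 ω * g (X ω)) P := by
      refine ibdd _ (((he.comp hX).mul hA0).mul (hg.comp hX)) C fun ω => ?_
      have e1 : e (X ω) * A0 ω * g (X ω) = e (X ω) * (A0 ω * g (X ω)) := by ring
      rw [e1, abs_mul]
      calc |e (X ω)| * |A0 ω * g (X ω)| ≤ 1 * C := by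
            refine mul_le_mul (heabs _) ?_ (abs_nonneg _) zero_le_one
            rw [abs_mul]
            calc |A0 ω| * |g (X ω)| ≤ 1 * C :=
                  mul_le_mul (hA0abs ω) (hC _) (abs_nonneg _) zero_le_one
            _ = C := by ring
      _ = C := by ring
    calc ∫ ω, (1 - Z ω) * A0 ω * g (X ω) ∂P
        = ∫ ω, (A0 ω * g (X ω) - Z ω * A0 ω * g (X ω)) ∂P :=
          integral_congr_ae (ae_of_all _ fun ω => by ring)
    _ = ∫ ω, A0 ω * g (X ω) ∂P - ∫ ω, Z ω * A0 ω * g (X ω) ∂P := integral_sub i1 i2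
    _ = ∫ ω, A0 ω * g (X ω) ∂P - ∫ ω, e (X ω) * A0 ω * g (X ω) ∂P := by
          rw [hU0 g hg ⟨C, hC⟩]
    _ = ∫ ω, (A0 ω * g (X ω) - e (X ω) * A0 ω * g (X ω)) ∂P := (integral_sub i1 i3).symm
    _ = ∫ ω, (1 - e (X ω)) * A0 ω * g (X ω) ∂P :=
          integral_congr_ae (ae_of_all _ fun ω => by ring)
  have hlv0 : ∀ g : S → ℝ, Measurable g → (∃ C, ∀ x, |g x| ≤ C) →
      ∫ ω, A ω * (1 - Z ω) * g (X ω) ∂P = ∫ ω, l0 (X ω) * (1 - Z ω) * g (X ω) ∂P := by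
    intro g hg hgb
    have := hl0v g hg hgb
    simp only [hZif0] at this
    exact this
  have key0 := key_lemma P X hX (fun ω => 1 - Z ω) (measurable_const.sub hZ) hW001
    A0 hA0 hA0_01 A hAW0 (fun x => 1 - e x) (measurable_const.sub he) ε hε hqbd0
    hVq0 hUq0 l0 hl0 hlv0
  constructor
  · filter_upwards [key0] with ω hω
    rw [hfun0]
    exact ⟨hω, rfl⟩
  · filter_upwards [key1] with ω hω
    rw [hfun1]
    exact ⟨hω, rfl⟩
end

section
/- Without assuming monotonicity, the covariate-adjusted intention-to-treat contrast on the outcome identifies the covariance-type contrast of potential outcomes: Γ0 := E[m1(X) − m0(X)] = E[(Y1 − Y0)·(A1 − A0)] = E[(Y1 − Y0)·1{A1 > A0}] − E[(Y1 − Y0)·1{A1 < A0}]. -/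
open MeasureTheory ProbabilityTheory

lemma ibd {Ω : Type*} [MeasurableSpace Ω] {P : Measure Ω} [IsFiniteMeasure P]
    {f : Ω → ℝ} (hf : Measurable f) {C : ℝ} (h : ∀ ω, |f ω| ≤ C) :
    Integrable f P :=
  (integrable_const C).mono' hf.aestronglyMeasurable
    (Filter.Eventually.of_forall (by simpa using h))

lemma tail_zero {Ω : Type*} [MeasurableSpace Ω] (P : Measure Ω) [IsProbabilityMeasure P]
    {F W : Ω → ℝ} (hF : Measurable F) (hW : Measurable W)
    {ε C : ℝ} (hε : 0 < ε) (hWl : ∀ ω, ε ≤ W ω) (hW1 : ∀ ω, W ω ≤ 1) (hC : 0 ≤ C)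
    (key : ∀ n : ℕ, ∫ ω, ({ω | (C+1)/ε < F ω ∧ F ω ≤ n}.indicator (fun ω => W ω * F ω)) ω ∂P
      ≤ C * (P {ω | (C+1)/ε < F ω ∧ F ω ≤ n}).toReal) :
    ∀ᵐ ω ∂P, F ω ≤ (C+1)/ε := by
  set K := (C+1)/ε with hK
  have hKpos : 0 < K := div_pos (by linarith) hε
  have hεK : ε * K = C + 1 := by rw [hK]; field_simp
  have hBnull : ∀ n : ℕ, P {ω | K < F ω ∧ F ω ≤ n} = 0 := by
    intro n
    set B := {ω | K < F ω ∧ F ω ≤ n} with hB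
    have hBm : MeasurableSet B :=
      (measurableSet_lt measurable_const hF).inter (measurableSet_le hF measurable_const)
    have hIint : Integrable (B.indicator (fun ω => W ω * F ω)) P := by
      refine ibd ((hW.mul hF).indicator hBm) (C := (n:ℝ)) ?_
      intro ω
      by_cases hω : ω ∈ B
      · rw [Set.indicator_of_mem hω]
        have h1 := hWl ω; have h2 := hW1 ω
        have h3 : 0 < F ω := lt_trans hKpos hω.1
        have h4 : F ω ≤ n := hω.2
        rw [abs_of_nonneg (by nlinarith)]
        nlinarith
      · rw [Set.indicator_of_notMem hω]
        simp [Nat.cast_nonneg]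
    have hconst : Integrable (B.indicator (fun _ : Ω => C + 1)) P :=
      ibd (measurable_const.indicator hBm) (C := |C + 1|) (fun ω => by
        by_cases hω : ω ∈ B
        · rw [Set.indicator_of_mem hω]
        · rw [Set.indicator_of_notMem hω]; simp)
    have hmono : ∫ ω, (B.indicator (fun _ : Ω => C + 1)) ω ∂P
        ≤ ∫ ω, (B.indicator (fun ω => W ω * F ω)) ω ∂P := by
      refine integral_mono hconst hIint ?_
      intro ω
      by_cases hω : ω ∈ B
      · rw [Set.indicator_of_mem hω, Set.indicator_of_mem hω]
        have h1 := hWl ω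
        have h3 : K < F ω := hω.1
        nlinarith
      · rw [Set.indicator_of_notMem hω, Set.indicator_of_notMem hω]
    have hconstval : ∫ ω, (B.indicator (fun _ : Ω => C + 1)) ω ∂P = (C+1) * (P B).toReal := by
      rw [integral_indicator_const _ hBm]; simp [mul_comm, measureReal_def]
    have : (C+1) * (P B).toReal ≤ C * (P B).toReal := by
      rw [← hconstval]; exact le_trans hmono (key n)
    have hT : (P B).toReal ≤ 0 := by nlinarith
    have hT0 : (P B).toReal = 0 := le_antisymm hT ENNReal.toReal_nonneg
    exact (ENNReal.toReal_eq_zero_iff _).mp hT0 |>.resolve_right (measure_ne_top P B)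
  have hsub : {ω | ¬ F ω ≤ K} ⊆ ⋃ n : ℕ, {ω | K < F ω ∧ F ω ≤ n} := by
    intro ω hω
    simp only [Set.mem_setOf_eq, not_le] at hω
    exact Set.mem_iUnion.mpr ⟨⌈F ω⌉₊, hω, Nat.le_ceil _⟩
  have : P {ω | ¬ F ω ≤ K} = 0 :=
    measure_mono_null hsub (measure_iUnion_null hBnull)
  exact this

lemma tail_aux {Ω : Type*} [MeasurableSpace Ω] (P : Measure Ω) [IsProbabilityMeasure P]
    {S : Type*} [MeasurableSpace S] (X : Ω → S) (hX : Measurable X)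
    (V : Ω → ℝ) (hV : Measurable V) (hV01 : ∀ ω, V ω = 0 ∨ V ω = 1)
    (W : S → ℝ) (hW : Measurable W)
    {ε : ℝ} (hε : 0 < ε) (hWε : ∀ x, ε ≤ W x) (hW1 : ∀ x, W x ≤ 1)
    (hVW : ∀ t : S → ℝ, Measurable t → (∃ C, ∀ x, |t x| ≤ C) →
      ∫ ω, V ω * t (X ω) ∂P = ∫ ω, W (X ω) * t (X ω) ∂P)
    (Y : Ω → ℝ) (hYm : Measurable Y) {Cy : ℝ} (hCy : 0 ≤ Cy) (hYb : ∀ ω, |Y ω| ≤ Cy)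
    (m : S → ℝ) (hm : Measurable m)
    (hmv : ∀ g : S → ℝ, Measurable g → (∃ C, ∀ x, |g x| ≤ C) →
      ∫ ω, Y ω * V ω * g (X ω) ∂P = ∫ ω, m (X ω) * V ω * g (X ω) ∂P) :
    ∀ᵐ ω ∂P, m (X ω) ≤ (Cy+1)/ε := by
  refine tail_zero P (hm.comp hX) (hW.comp hX) hε (fun ω => hWε _) (fun ω => hW1 _) hCy ?_
  intro n
  set K := (Cy+1)/ε with hKdef
  have hKpos : 0 < K := div_pos (by linarith) hε
  set Bs : Set S := {x | K < m x ∧ m x ≤ n} with hBs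
  have hBsm : MeasurableSet Bs :=
    (measurableSet_lt measurable_const hm).inter (measurableSet_le hm measurable_const)
  set g : S → ℝ := Bs.indicator (fun _ => 1) with hgdef
  have hg : Measurable g := measurable_const.indicator hBsm
  have hgmem : ∀ x, x ∈ Bs → g x = 1 := fun x hx => Set.indicator_of_mem hx _
  have hgnot : ∀ x, x ∉ Bs → g x = 0 := fun x hx => Set.indicator_of_notMem hx _
  have hgb : ∀ x, |g x| ≤ 1 := by
    intro x; by_cases hx : x ∈ Bs
    · rw [hgmem x hx]; simp
    · rw [hgnot x hx]; simp
  set t : S → ℝ := fun x => m x * g x with ht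
  have htm : Measurable t := hm.mul hg
  have htb : ∀ x, |t x| ≤ n := by
    intro x; by_cases hx : x ∈ Bs
    · rw [ht]; simp only; rw [hgmem x hx, mul_one]
      rw [abs_of_nonneg (le_of_lt (lt_trans hKpos hx.1))]; exact hx.2
    · rw [ht]; simp only; rw [hgnot x hx, mul_zero]; simp
  -- B in Ω
  set B : Set Ω := {ω | K < m (X ω) ∧ m (X ω) ≤ n} with hB
  have hmemB : ∀ ω, ω ∈ B ↔ X ω ∈ Bs := fun ω => Iff.rfl
  have hBm : MeasurableSet B :=
    (measurableSet_lt measurable_const (hm.comp hX)).inter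
      (measurableSet_le (hm.comp hX) measurable_const)
  -- chain of equalities
  have E0 : ∫ ω, (B.indicator (fun ω => W (X ω) * m (X ω))) ω ∂P
      = ∫ ω, W (X ω) * t (X ω) ∂P := by
    refine integral_congr_ae (Filter.Eventually.of_forall fun ω => ?_)
    by_cases hω : ω ∈ B
    · rw [Set.indicator_of_mem hω, ht]; simp only
      rw [hgmem _ ((hmemB ω).mp hω), mul_one]
    · rw [Set.indicator_of_notMem hω, ht]; simp only
      rw [hgnot _ (fun h => hω ((hmemB ω).mpr h)), mul_zero, mul_zero]
  have E1 : ∫ ω, W (X ω) * t (X ω) ∂P = ∫ ω, V ω * t (X ω) ∂P :=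
    (hVW t htm ⟨n, htb⟩).symm
  have E2 : ∫ ω, V ω * t (X ω) ∂P = ∫ ω, m (X ω) * V ω * g (X ω) ∂P := by
    refine integral_congr_ae (Filter.Eventually.of_forall fun ω => ?_)
    rw [ht]; ring
  have E3 : ∫ ω, m (X ω) * V ω * g (X ω) ∂P = ∫ ω, Y ω * V ω * g (X ω) ∂P :=
    (hmv g hg ⟨1, hgb⟩).symm
  have E4 : ∫ ω, Y ω * V ω * g (X ω) ∂P ≤ Cy * (P B).toReal := by
    have hint1 : Integrable (fun ω => Y ω * V ω * g (X ω)) P := by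
      refine ibd ((hYm.mul hV).mul (hg.comp hX)) (C := Cy) ?_
      intro ω
      by_cases hx : X ω ∈ Bs
      · rw [hgmem _ hx, mul_one, abs_mul]
        rcases hV01 ω with h | h
        · rw [h, abs_zero, mul_zero]; exact hCy
        · rw [h, abs_one, mul_one]; exact hYb ω
      · rw [hgnot _ hx, mul_zero, abs_zero]; exact hCy
    have hint2 : Integrable (B.indicator (fun _ : Ω => Cy)) P :=
      ibd (measurable_const.indicator hBm) (C := Cy) (fun ω => by
        by_cases hω : ω ∈ B
        · rw [Set.indicator_of_mem hω, abs_of_nonneg hCy]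
        · rw [Set.indicator_of_notMem hω]; simpa using hCy)
    have hmono : ∫ ω, Y ω * V ω * g (X ω) ∂P ≤ ∫ ω, (B.indicator (fun _ : Ω => Cy)) ω ∂P := by
      refine integral_mono hint1 hint2 ?_
      intro ω
      show Y ω * V ω * g (X ω) ≤ B.indicator (fun _ : Ω => Cy) ω
      by_cases hω : ω ∈ B
      · rw [Set.indicator_of_mem hω, hgmem _ ((hmemB ω).mp hω), mul_one]
        calc Y ω * V ω ≤ |Y ω * V ω| := le_abs_self _
        _ ≤ Cy := by
            rcases hV01 ω with h | h
            · rw [h, mul_zero]; simpa using hCy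
            · rw [h, mul_one]; exact hYb ω
      · rw [Set.indicator_of_notMem hω, hgnot _ (fun h => hω ((hmemB ω).mpr h)), mul_zero]
    calc ∫ ω, Y ω * V ω * g (X ω) ∂P ≤ ∫ ω, (B.indicator (fun _ : Ω => Cy)) ω ∂P := hmono
    _ = Cy * (P B).toReal := by rw [integral_indicator_const _ hBm]; simp [mul_comm, measureReal_def]
  calc ∫ ω, (B.indicator (fun ω => W (X ω) * m (X ω))) ω ∂P
      = ∫ ω, Y ω * V ω * g (X ω) ∂P := by rw [E0, E1, E2, E3]
  _ ≤ Cy * (P B).toReal := E4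

/-- Without monotonicity, Γ0 := E[m1(X) − m0(X)] = E[(Y1 − Y0)·(A1 − A0)]
= E[(Y1 − Y0)·1{A1 > A0}] − E[(Y1 − Y0)·1{A1 < A0}]. -/
theorem stmt_2
    {Ω : Type*} [MeasurableSpace Ω] (P : Measure Ω) [IsProbabilityMeasure P]
    {S : Type*} [mS : MeasurableSpace S]
    (X : Ω → S) (hX : Measurable X)
    (Z A0 A1 Y0 Y1 : Ω → ℝ)
    (hZ : Measurable Z) (hA0 : Measurable A0) (hA1 : Measurable A1)
    (hY0 : Measurable Y0) (hY1 : Measurable Y1)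
    (hZ01 : ∀ ω, Z ω = 0 ∨ Z ω = 1)
    (hA0_01 : ∀ ω, A0 ω = 0 ∨ A0 ω = 1)
    (hA1_01 : ∀ ω, A1 ω = 0 ∨ A1 ω = 1)
    (hY0b : ∃ C, ∀ ω, |Y0 ω| ≤ C) (hY1b : ∃ C, ∀ ω, |Y1 ω| ≤ C)
    (A Y : Ω → ℝ)
    (hA : A = fun ω => (1 - Z ω) * A0 ω + Z ω * A1 ω)
    (hY : Y = fun ω => (1 - A ω) * Y0 ω + A ω * Y1 ω)
    (e : S → ℝ) (he : Measurable e) (ε : ℝ) (hε : 0 < ε) (hε2 : ε < 1/2)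
    (hebd : ∀ x, ε ≤ e x ∧ e x ≤ 1 - ε)
    (hVe : ∀ g : S → ℝ, Measurable g → (∃ C, ∀ x, |g x| ≤ C) →
      ∫ ω, Z ω * g (X ω) ∂P = ∫ ω, e (X ω) * g (X ω) ∂P)
    (hUnconf : ∀ ψ : ℝ × ℝ × ℝ × ℝ → ℝ, Measurable ψ → (∃ C, ∀ v, |ψ v| ≤ C) →
      ∀ g : S → ℝ, Measurable g → (∃ C, ∀ x, |g x| ≤ C) →
      ∫ ω, Z ω * ψ (A0 ω, A1 ω, Y0 ω, Y1 ω) * g (X ω) ∂P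
        = ∫ ω, e (X ω) * ψ (A0 ω, A1 ω, Y0 ω, Y1 ω) * g (X ω) ∂P)
    (m0 m1 : S → ℝ) (hm0 : Measurable m0) (hm1 : Measurable m1)
    (hm0v : ∀ g : S → ℝ, Measurable g → (∃ C, ∀ x, |g x| ≤ C) →
      ∫ ω, Y ω * (if Z ω = 0 then (1:ℝ) else 0) * g (X ω) ∂P
        = ∫ ω, m0 (X ω) * (if Z ω = 0 then (1:ℝ) else 0) * g (X ω) ∂P)
    (hm1v : ∀ g : S → ℝ, Measurable g → (∃ C, ∀ x, |g x| ≤ C) →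
      ∫ ω, Y ω * (if Z ω = 1 then (1:ℝ) else 0) * g (X ω) ∂P
        = ∫ ω, m1 (X ω) * (if Z ω = 1 then (1:ℝ) else 0) * g (X ω) ∂P) :
    (∫ ω, (m1 (X ω) - m0 (X ω)) ∂P) = ∫ ω, (Y1 ω - Y0 ω) * (A1 ω - A0 ω) ∂P
    ∧ (∫ ω, (m1 (X ω) - m0 (X ω)) ∂P)
        = (∫ ω in {ω | A1 ω = 1 ∧ A0 ω = 0}, (Y1 ω - Y0 ω) ∂P)
          - ∫ ω in {ω | A1 ω = 0 ∧ A0 ω = 1}, (Y1 ω - Y0 ω) ∂P := by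

  -- basic setup
  obtain ⟨C0, hC0⟩ := hY0b
  obtain ⟨C1, hC1⟩ := hY1b
  set Cb : ℝ := max (max C0 C1) 0 with hCbdef
  have hCb0 : 0 ≤ Cb := le_max_right _ _
  have hY0b' : ∀ ω, |Y0 ω| ≤ Cb := fun ω =>
    le_trans (hC0 ω) (le_trans (le_max_left _ _) (le_max_left _ _))
  have hY1b' : ∀ ω, |Y1 ω| ≤ Cb := fun ω =>
    le_trans (hC1 ω) (le_trans (le_max_right _ _) (le_max_left _ _))
  have hAm : Measurable A := by
    rw [hA]; exact ((measurable_const.sub hZ).mul hA0).add (hZ.mul hA1)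
  have hA01 : ∀ ω, A ω = 0 ∨ A ω = 1 := by
    intro ω; rw [hA]
    rcases hZ01 ω with h | h
    · rcases hA0_01 ω with h0 | h0 <;> simp [h, h0]
    · rcases hA1_01 ω with h1 | h1 <;> simp [h, h1]
  have hYm : Measurable Y := by
    rw [hY]; exact ((measurable_const.sub hAm).mul hY0).add (hAm.mul hY1)
  have hYb : ∀ ω, |Y ω| ≤ Cb := by
    intro ω; rw [hY]
    rcases hA01 ω with h | h <;> simp [h]
    · exact hY0b' ω
    · exact hY1b' ω
  have hχ1 : ∀ ω, (if Z ω = 1 then (1:ℝ) else 0) = Z ω := by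
    intro ω; rcases hZ01 ω with h | h <;> simp [h]
  have hχ0 : ∀ ω, (if Z ω = 0 then (1:ℝ) else 0) = 1 - Z ω := by
    intro ω; rcases hZ01 ω with h | h <;> simp [h]
  have hm1v' : ∀ g : S → ℝ, Measurable g → (∃ C, ∀ x, |g x| ≤ C) →
      ∫ ω, Y ω * Z ω * g (X ω) ∂P = ∫ ω, m1 (X ω) * Z ω * g (X ω) ∂P := by
    intro g hg hgb
    have h := hm1v g hg hgb
    simpa only [hχ1] using h
  have hm0v' : ∀ g : S → ℝ, Measurable g → (∃ C, ∀ x, |g x| ≤ C) →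
      ∫ ω, Y ω * (1 - Z ω) * g (X ω) ∂P = ∫ ω, m0 (X ω) * (1 - Z ω) * g (X ω) ∂P := by
    intro g hg hgb
    have h := hm0v g hg hgb
    simpa only [hχ0] using h
  have he1 : ∀ x, ε ≤ e x := fun x => (hebd x).1
  have he2 : ∀ x, e x ≤ 1 - ε := fun x => (hebd x).2
  have hex0 : ∀ x, 0 < e x := fun x => lt_of_lt_of_le hε (he1 x)
  have h1ex0 : ∀ x, 0 < 1 - e x := fun x => by have := he2 x; linarith
  have hZ1 : ∀ ω, (1 - Z ω) = 0 ∨ (1 - Z ω) = 1 := by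
    intro ω; rcases hZ01 ω with h | h
    · right; rw [h]; ring
    · left; rw [h]; ring
  -- integrability helper facts will be created inline
  have hVe1 : ∀ t : S → ℝ, Measurable t → (∃ C, ∀ x, |t x| ≤ C) →
      ∫ ω, (1 - Z ω) * t (X ω) ∂P = ∫ ω, (1 - e (X ω)) * t (X ω) ∂P := by
    intro t ht ⟨Ct, hCt⟩
    have htint : Integrable (fun ω => t (X ω)) P := ibd (ht.comp hX) (fun ω => hCt (X ω))
    have hZt : Integrable (fun ω => Z ω * t (X ω)) P := by
      refine ibd (hZ.mul (ht.comp hX)) (C := 1 * Ct) ?_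
      intro ω; rw [abs_mul]
      refine mul_le_mul ?_ (hCt _) (abs_nonneg _) zero_le_one
      rcases hZ01 ω with h | h <;> simp [h]
    have het : Integrable (fun ω => e (X ω) * t (X ω)) P := by
      refine ibd ((he.comp hX).mul (ht.comp hX)) (C := 1 * Ct) ?_
      intro ω; rw [abs_mul]
      refine mul_le_mul ?_ (hCt _) (abs_nonneg _) zero_le_one
      rw [abs_of_pos (hex0 _)]
      have := he2 (X ω); linarith
    have e1 : ∫ ω, (1 - Z ω) * t (X ω) ∂P
        = ∫ ω, t (X ω) ∂P - ∫ ω, Z ω * t (X ω) ∂P := by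
      rw [← integral_sub htint hZt]
      refine integral_congr_ae (Filter.Eventually.of_forall fun ω => ?_); ring
    have e2 : ∫ ω, (1 - e (X ω)) * t (X ω) ∂P
        = ∫ ω, t (X ω) ∂P - ∫ ω, e (X ω) * t (X ω) ∂P := by
      rw [← integral_sub htint het]
      refine integral_congr_ae (Filter.Eventually.of_forall fun ω => ?_); ring
    rw [e1, e2, hVe t ht ⟨Ct, hCt⟩]
  -- the a.e. bound on m1 and m0
  set K : ℝ := (Cb + 1) / ε with hKdef
  have hKpos : 0 < K := div_pos (by linarith) hε
  have hWe1 : ∀ x, e x ≤ 1 := fun x => by have := he2 x; linarith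
  have hW1e : ∀ x, ε ≤ 1 - e x := fun x => by have := he2 x; linarith
  have hW1e1 : ∀ x, 1 - e x ≤ 1 := fun x => by have := he1 x; linarith
  have h1u : ∀ᵐ ω ∂P, m1 (X ω) ≤ K :=
    tail_aux P X hX Z hZ hZ01 e he hε he1 hWe1 hVe Y hYm hCb0 hYb m1 hm1 hm1v'
  have h1l : ∀ᵐ ω ∂P, (fun x => -(m1 x)) (X ω) ≤ K := by
    refine tail_aux P X hX Z hZ hZ01 e he hε he1 hWe1 hVe (fun ω => -(Y ω)) hYm.neg hCb0
      (fun ω => by rw [abs_neg]; exact hYb ω) (fun x => -(m1 x)) hm1.neg ?_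
    intro g hg hgb
    have h := hm1v' g hg hgb
    have l : (fun ω => (-(Y ω)) * Z ω * g (X ω)) = fun ω => -(Y ω * Z ω * g (X ω)) := by
      funext ω; ring
    have r : (fun ω => (-(m1 (X ω))) * Z ω * g (X ω)) = fun ω => -(m1 (X ω) * Z ω * g (X ω)) := by
      funext ω; ring
    rw [l, r, integral_neg, integral_neg, h]
  have h0u : ∀ᵐ ω ∂P, m0 (X ω) ≤ K :=
    tail_aux P X hX (fun ω => 1 - Z ω) (measurable_const.sub hZ) hZ1
      (fun x => 1 - e x) (measurable_const.sub he) hε hW1e hW1e1 hVe1 Y hYm hCb0 hYb m0 hm0 hm0v'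
  have h0l : ∀ᵐ ω ∂P, (fun x => -(m0 x)) (X ω) ≤ K := by
    refine tail_aux P X hX (fun ω => 1 - Z ω) (measurable_const.sub hZ) hZ1
      (fun x => 1 - e x) (measurable_const.sub he) hε hW1e hW1e1 hVe1 (fun ω => -(Y ω)) hYm.neg hCb0
      (fun ω => by rw [abs_neg]; exact hYb ω) (fun x => -(m0 x)) hm0.neg ?_
    intro g hg hgb
    have h := hm0v' g hg hgb
    have l : (fun ω => (-(Y ω)) * (1 - Z ω) * g (X ω)) = fun ω => -(Y ω * (1 - Z ω) * g (X ω)) := by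
      funext ω; ring
    have r : (fun ω => (-(m0 (X ω))) * (1 - Z ω) * g (X ω))
        = fun ω => -(m0 (X ω) * (1 - Z ω) * g (X ω)) := by
      funext ω; ring
    rw [l, r, integral_neg, integral_neg, h]
  -- clamped versions
  set M1 : S → ℝ := fun x => max (-K) (min K (m1 x)) with hM1def
  set M0 : S → ℝ := fun x => max (-K) (min K (m0 x)) with hM0def
  have hM1m : Measurable M1 := measurable_const.max (measurable_const.min hm1)
  have hM0m : Measurable M0 := measurable_const.max (measurable_const.min hm0)
  have hclampb : ∀ t : ℝ, |max (-K) (min K t)| ≤ K := by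
    intro t
    rw [abs_le]
    constructor
    · exact le_max_left _ _
    · exact max_le (by linarith) (min_le_left _ _)
  have hclampe : ∀ t : ℝ, t ≤ K → -t ≤ K → max (-K) (min K t) = t := by
    intro t h1 h2
    rw [min_eq_right h1, max_eq_right (by linarith)]
  have hM1b : ∀ x, |M1 x| ≤ K := fun x => hclampb _
  have hM0b : ∀ x, |M0 x| ≤ K := fun x => hclampb _
  have hM1ae : ∀ᵐ ω ∂P, M1 (X ω) = m1 (X ω) := by
    filter_upwards [h1u, h1l] with ω hu hl
    exact hclampe _ hu hl
  have hM0ae : ∀ᵐ ω ∂P, M0 (X ω) = m0 (X ω) := by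
    filter_upwards [h0u, h0l] with ω hu hl
    exact hclampe _ hu hl
  have hM1v : ∀ g : S → ℝ, Measurable g → (∃ C, ∀ x, |g x| ≤ C) →
      ∫ ω, Y ω * Z ω * g (X ω) ∂P = ∫ ω, M1 (X ω) * Z ω * g (X ω) ∂P := by
    intro g hg hgb
    rw [hm1v' g hg hgb]
    refine integral_congr_ae ?_
    filter_upwards [hM1ae] with ω h
    rw [h]
  have hM0v : ∀ g : S → ℝ, Measurable g → (∃ C, ∀ x, |g x| ≤ C) →
      ∫ ω, Y ω * (1 - Z ω) * g (X ω) ∂P = ∫ ω, M0 (X ω) * (1 - Z ω) * g (X ω) ∂P := by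
    intro g hg hgb
    rw [hm0v' g hg hgb]
    refine integral_congr_ae ?_
    filter_upwards [hM0ae] with ω h
    rw [h]
  -- clamp facts
  have hclampCb : ∀ t : ℝ, |t| ≤ Cb → max (-Cb) (min Cb t) = t := by
    intro t ht
    rw [abs_le] at ht
    rw [min_eq_right ht.2, max_eq_right ht.1]
  have hclampCbb : ∀ t : ℝ, |max (-Cb) (min Cb t)| ≤ Cb := by
    intro t; rw [abs_le]
    exact ⟨le_max_left _ _, max_le (by linarith) (min_le_left _ _)⟩
  have hcl01b : ∀ t : ℝ, 0 ≤ max 0 (min 1 t) ∧ max 0 (min 1 t) ≤ 1 :=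
    fun t => ⟨le_max_left _ _, max_le zero_le_one (min_le_left _ _)⟩
  have hcl01 : ∀ t : ℝ, t = 0 ∨ t = 1 → max 0 (min 1 t) = t := by
    rintro t (h | h) <;> simp [h]
  set ψ1 : ℝ × ℝ × ℝ × ℝ → ℝ := fun v =>
    (1 - max 0 (min 1 v.2.1)) * (max (-Cb) (min Cb v.2.2.1))
      + (max 0 (min 1 v.2.1)) * (max (-Cb) (min Cb v.2.2.2)) with hh1def
  set ψ0 : ℝ × ℝ × ℝ × ℝ → ℝ := fun v =>
    (1 - max 0 (min 1 v.1)) * (max (-Cb) (min Cb v.2.2.1))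
      + (max 0 (min 1 v.1)) * (max (-Cb) (min Cb v.2.2.2)) with hh0def
  have hp0 : Measurable fun v : ℝ × ℝ × ℝ × ℝ => v.1 := measurable_fst
  have hp1 : Measurable fun v : ℝ × ℝ × ℝ × ℝ => v.2.1 := measurable_snd.fst
  have hp2 : Measurable fun v : ℝ × ℝ × ℝ × ℝ => v.2.2.1 := measurable_snd.snd.fst
  have hp3 : Measurable fun v : ℝ × ℝ × ℝ × ℝ => v.2.2.2 := measurable_snd.snd.snd
  have hψ1m : Measurable ψ1 :=
    ((measurable_const.sub (measurable_const.max (measurable_const.min hp1))).mul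
        (measurable_const.max (measurable_const.min hp2))).add
      ((measurable_const.max (measurable_const.min hp1)).mul
        (measurable_const.max (measurable_const.min hp3)))
  have hψ0m : Measurable ψ0 :=
    ((measurable_const.sub (measurable_const.max (measurable_const.min hp0))).mul
        (measurable_const.max (measurable_const.min hp2))).add
      ((measurable_const.max (measurable_const.min hp0)).mul
        (measurable_const.max (measurable_const.min hp3)))
  have habs1 : ∀ t : ℝ, |1 - max 0 (min 1 t)| ≤ 1 := by
    intro t
    have := hcl01b t
    rw [abs_le]; constructor <;> linarith [this.1, this.2]
  have habs2 : ∀ t : ℝ, |max 0 (min 1 t)| ≤ 1 := by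
    intro t
    have := hcl01b t
    rw [abs_le]; constructor <;> linarith [this.1, this.2]
  have hψ1b : ∀ v, |ψ1 v| ≤ Cb + Cb := by
    intro v
    simp only [hh1def]
    calc |(1 - max 0 (min 1 v.2.1)) * (max (-Cb) (min Cb v.2.2.1))
        + (max 0 (min 1 v.2.1)) * (max (-Cb) (min Cb v.2.2.2))|
        ≤ |(1 - max 0 (min 1 v.2.1)) * (max (-Cb) (min Cb v.2.2.1))|
          + |(max 0 (min 1 v.2.1)) * (max (-Cb) (min Cb v.2.2.2))| := abs_add_le _ _
      _ ≤ Cb + Cb := by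
          rw [abs_mul, abs_mul]
          have e1 : |1 - max 0 (min 1 v.2.1)| * |max (-Cb) (min Cb v.2.2.1)| ≤ 1 * Cb :=
            mul_le_mul (habs1 _) (hclampCbb _) (abs_nonneg _) zero_le_one
          have e2 : |max 0 (min 1 v.2.1)| * |max (-Cb) (min Cb v.2.2.2)| ≤ 1 * Cb :=
            mul_le_mul (habs2 _) (hclampCbb _) (abs_nonneg _) zero_le_one
          linarith
  have hψ0b : ∀ v, |ψ0 v| ≤ Cb + Cb := by
    intro v
    simp only [hh0def]
    calc |(1 - max 0 (min 1 v.1)) * (max (-Cb) (min Cb v.2.2.1))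
        + (max 0 (min 1 v.1)) * (max (-Cb) (min Cb v.2.2.2))|
        ≤ |(1 - max 0 (min 1 v.1)) * (max (-Cb) (min Cb v.2.2.1))|
          + |(max 0 (min 1 v.1)) * (max (-Cb) (min Cb v.2.2.2))| := abs_add_le _ _
      _ ≤ Cb + Cb := by
          rw [abs_mul, abs_mul]
          have e1 : |1 - max 0 (min 1 v.1)| * |max (-Cb) (min Cb v.2.2.1)| ≤ 1 * Cb :=
            mul_le_mul (habs1 _) (hclampCbb _) (abs_nonneg _) zero_le_one
          have e2 : |max 0 (min 1 v.1)| * |max (-Cb) (min Cb v.2.2.2)| ≤ 1 * Cb :=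
            mul_le_mul (habs2 _) (hclampCbb _) (abs_nonneg _) zero_le_one
          linarith
  have hψ1val : ∀ ω, ψ1 (A0 ω, A1 ω, Y0 ω, Y1 ω) = (1 - A1 ω) * Y0 ω + A1 ω * Y1 ω := by
    intro ω
    simp only [hh1def]
    rw [hcl01 _ (hA1_01 ω), hclampCb _ (hY0b' ω), hclampCb _ (hY1b' ω)]
  have hψ0val : ∀ ω, ψ0 (A0 ω, A1 ω, Y0 ω, Y1 ω) = (1 - A0 ω) * Y0 ω + A0 ω * Y1 ω := by
    intro ω
    simp only [hh0def]
    rw [hcl01 _ (hA0_01 ω), hclampCb _ (hY0b' ω), hclampCb _ (hY1b' ω)]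
  -- key1
  have key1 : ∫ ω, M1 (X ω) ∂P = ∫ ω, ((1 - A1 ω) * Y0 ω + A1 ω * Y1 ω) ∂P := by
    set g1 : S → ℝ := fun x => (e x)⁻¹ with hg1def
    have hg1m : Measurable g1 := he.inv
    have hg1b : ∀ x, |g1 x| ≤ ε⁻¹ := by
      intro x
      simp only [hg1def]
      rw [abs_of_pos (inv_pos.mpr (hex0 x))]
      exact inv_anti₀ hε (he1 x)
    set q1 : S → ℝ := fun x => M1 x * g1 x with hq1def
    have hq1m : Measurable q1 := hM1m.mul hg1m
    have hq1b : ∀ x, |q1 x| ≤ K * ε⁻¹ := by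
      intro x
      simp only [hq1def, abs_mul]
      exact mul_le_mul (hM1b x) (hg1b x) (abs_nonneg _) (le_of_lt hKpos)
    have s1 : ∫ ω, M1 (X ω) ∂P = ∫ ω, e (X ω) * q1 (X ω) ∂P := by
      refine integral_congr_ae (Filter.Eventually.of_forall fun ω => ?_)
      beta_reduce
      have hne : e (X ω) ≠ 0 := ne_of_gt (hex0 _)
      simp only [hq1def, hg1def]
      field_simp
    have s2 := (hVe q1 hq1m ⟨_, hq1b⟩).symm
    have s3 : ∫ ω, Z ω * q1 (X ω) ∂P = ∫ ω, M1 (X ω) * Z ω * g1 (X ω) ∂P := by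
      refine integral_congr_ae (Filter.Eventually.of_forall fun ω => ?_)
      beta_reduce
      simp only [hq1def]; ring
    have s4 := (hM1v g1 hg1m ⟨_, hg1b⟩).symm
    have s5 : ∫ ω, Y ω * Z ω * g1 (X ω) ∂P
        = ∫ ω, Z ω * ψ1 (A0 ω, A1 ω, Y0 ω, Y1 ω) * g1 (X ω) ∂P := by
      refine integral_congr_ae (Filter.Eventually.of_forall fun ω => ?_)
      beta_reduce
      rcases hZ01 ω with h | h
      · rw [h]; ring
      · rw [h, hψ1val ω]
        have hAω : A ω = A1 ω := by rw [hA]; simp [h]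
        rw [hY]; simp only; rw [hAω]; ring
    have s6 := hUnconf ψ1 hψ1m ⟨_, hψ1b⟩ g1 hg1m ⟨_, hg1b⟩
    have s7 : ∫ ω, e (X ω) * ψ1 (A0 ω, A1 ω, Y0 ω, Y1 ω) * g1 (X ω) ∂P
        = ∫ ω, ((1 - A1 ω) * Y0 ω + A1 ω * Y1 ω) ∂P := by
      refine integral_congr_ae (Filter.Eventually.of_forall fun ω => ?_)
      beta_reduce
      have hne : e (X ω) ≠ 0 := ne_of_gt (hex0 _)
      rw [hψ1val ω]
      simp only [hg1def]
      field_simp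
    rw [s1, s2, s3, s4, s5, s6, s7]
  -- key0
  have hquad : Measurable (fun ω => (A0 ω, A1 ω, Y0 ω, Y1 ω)) :=
    hA0.prodMk (hA1.prodMk (hY0.prodMk hY1))
  have key0 : ∫ ω, M0 (X ω) ∂P = ∫ ω, ((1 - A0 ω) * Y0 ω + A0 ω * Y1 ω) ∂P := by
    set g0 : S → ℝ := fun x => (1 - e x)⁻¹ with hg0def
    have hg0m : Measurable g0 := (measurable_const.sub he).inv
    have hg0b : ∀ x, |g0 x| ≤ ε⁻¹ := by
      intro x
      simp only [hg0def]
      rw [abs_of_pos (inv_pos.mpr (h1ex0 x))]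
      exact inv_anti₀ hε (hW1e x)
    set q0 : S → ℝ := fun x => M0 x * g0 x with hq0def
    have hq0m : Measurable q0 := hM0m.mul hg0m
    have hq0b : ∀ x, |q0 x| ≤ K * ε⁻¹ := by
      intro x
      simp only [hq0def, abs_mul]
      exact mul_le_mul (hM0b x) (hg0b x) (abs_nonneg _) (le_of_lt hKpos)
    have s1 : ∫ ω, M0 (X ω) ∂P = ∫ ω, (1 - e (X ω)) * q0 (X ω) ∂P := by
      refine integral_congr_ae (Filter.Eventually.of_forall fun ω => ?_)
      beta_reduce
      have hne : 1 - e (X ω) ≠ 0 := ne_of_gt (h1ex0 _)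
      simp only [hq0def, hg0def]
      field_simp
    have s2 := (hVe1 q0 hq0m ⟨_, hq0b⟩).symm
    have s3 : ∫ ω, (1 - Z ω) * q0 (X ω) ∂P = ∫ ω, M0 (X ω) * (1 - Z ω) * g0 (X ω) ∂P := by
      refine integral_congr_ae (Filter.Eventually.of_forall fun ω => ?_)
      beta_reduce
      simp only [hq0def]; ring
    have s4 := (hM0v g0 hg0m ⟨_, hg0b⟩).symm
    have s5 : ∫ ω, Y ω * (1 - Z ω) * g0 (X ω) ∂P
        = ∫ ω, (1 - Z ω) * (ψ0 (A0 ω, A1 ω, Y0 ω, Y1 ω) * g0 (X ω)) ∂P := by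
      refine integral_congr_ae (Filter.Eventually.of_forall fun ω => ?_)
      beta_reduce
      rcases hZ01 ω with h | h
      · rw [h, hψ0val ω]
        have hAω : A ω = A0 ω := by rw [hA]; simp [h]
        rw [hY]; simp only; rw [hAω]; ring
      · rw [h]; ring
    -- split (1 - Z) for the Ω-level function
    have hF0m : Measurable (fun ω => ψ0 (A0 ω, A1 ω, Y0 ω, Y1 ω)) := hψ0m.comp hquad
    have hF0b : ∀ ω, |ψ0 (A0 ω, A1 ω, Y0 ω, Y1 ω)| ≤ Cb + Cb := fun ω => hψ0b _
    have I1 : Integrable (fun ω => ψ0 (A0 ω, A1 ω, Y0 ω, Y1 ω) * g0 (X ω)) P := by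
      refine ibd (hF0m.mul (hg0m.comp hX)) (C := (Cb + Cb) * ε⁻¹) ?_
      intro ω; rw [abs_mul]
      exact mul_le_mul (hF0b ω) (hg0b _) (abs_nonneg _) (by linarith)
    have I2 : Integrable (fun ω => Z ω * ψ0 (A0 ω, A1 ω, Y0 ω, Y1 ω) * g0 (X ω)) P := by
      refine ibd ((hZ.mul hF0m).mul (hg0m.comp hX)) (C := (Cb + Cb) * ε⁻¹) ?_
      intro ω; rw [abs_mul, abs_mul]
      have hZab : |Z ω| ≤ 1 := by rcases hZ01 ω with h | h <;> simp [h]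
      have h1 : |Z ω| * |ψ0 (A0 ω, A1 ω, Y0 ω, Y1 ω)| ≤ Cb + Cb := by
        calc |Z ω| * |ψ0 (A0 ω, A1 ω, Y0 ω, Y1 ω)| ≤ 1 * (Cb + Cb) :=
            mul_le_mul hZab (hF0b ω) (abs_nonneg _) zero_le_one
          _ = Cb + Cb := one_mul _
      exact mul_le_mul h1 (hg0b _) (abs_nonneg _) (by linarith)
    have I3 : Integrable (fun ω => e (X ω) * ψ0 (A0 ω, A1 ω, Y0 ω, Y1 ω) * g0 (X ω)) P := by
      refine ibd (((he.comp hX).mul hF0m).mul (hg0m.comp hX)) (C := (Cb + Cb) * ε⁻¹) ?_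
      intro ω; rw [abs_mul, abs_mul]
      have heab : |e (X ω)| ≤ 1 := by
        rw [abs_of_pos (hex0 _)]; exact hWe1 _
      have h1 : |e (X ω)| * |ψ0 (A0 ω, A1 ω, Y0 ω, Y1 ω)| ≤ Cb + Cb := by
        calc |e (X ω)| * |ψ0 (A0 ω, A1 ω, Y0 ω, Y1 ω)| ≤ 1 * (Cb + Cb) :=
            mul_le_mul heab (hF0b ω) (abs_nonneg _) zero_le_one
          _ = Cb + Cb := one_mul _
      exact mul_le_mul h1 (hg0b _) (abs_nonneg _) (by linarith)
    have s6 : ∫ ω, (1 - Z ω) * (ψ0 (A0 ω, A1 ω, Y0 ω, Y1 ω) * g0 (X ω)) ∂P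
        = ∫ ω, ψ0 (A0 ω, A1 ω, Y0 ω, Y1 ω) * g0 (X ω) ∂P
          - ∫ ω, Z ω * ψ0 (A0 ω, A1 ω, Y0 ω, Y1 ω) * g0 (X ω) ∂P := by
      rw [← integral_sub I1 I2]
      refine integral_congr_ae (Filter.Eventually.of_forall fun ω => ?_); ring
    have s7 := hUnconf ψ0 hψ0m ⟨_, hψ0b⟩ g0 hg0m ⟨_, hg0b⟩
    have s8 : ∫ ω, ψ0 (A0 ω, A1 ω, Y0 ω, Y1 ω) * g0 (X ω) ∂P
          - ∫ ω, e (X ω) * ψ0 (A0 ω, A1 ω, Y0 ω, Y1 ω) * g0 (X ω) ∂P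
        = ∫ ω, ((1 - A0 ω) * Y0 ω + A0 ω * Y1 ω) ∂P := by
      rw [← integral_sub I1 I3]
      refine integral_congr_ae (Filter.Eventually.of_forall fun ω => ?_)
      beta_reduce
      have hne : 1 - e (X ω) ≠ 0 := ne_of_gt (h1ex0 _)
      rw [← hψ0val ω]
      simp only [hg0def]
      field_simp
    rw [s1, s2, s3, s4, s5, s6, s7, s8]
  -- conclusion part 1
  have hM1int : Integrable (fun ω => M1 (X ω)) P := ibd (hM1m.comp hX) (fun ω => hM1b _)
  have hM0int : Integrable (fun ω => M0 (X ω)) P := ibd (hM0m.comp hX) (fun ω => hM0b _)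
  have hI1 : Integrable (fun ω => (1 - A1 ω) * Y0 ω + A1 ω * Y1 ω) P := by
    refine ibd (((measurable_const.sub hA1).mul hY0).add (hA1.mul hY1)) (C := Cb + Cb) ?_
    intro ω
    rcases hA1_01 ω with h | h <;> simp [h]
    · exact le_trans (hY0b' ω) (by linarith)
    · exact le_trans (hY1b' ω) (by linarith)
  have hI0 : Integrable (fun ω => (1 - A0 ω) * Y0 ω + A0 ω * Y1 ω) P := by
    refine ibd (((measurable_const.sub hA0).mul hY0).add (hA0.mul hY1)) (C := Cb + Cb) ?_
    intro ω
    rcases hA0_01 ω with h | h <;> simp [h]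
    · exact le_trans (hY0b' ω) (by linarith)
    · exact le_trans (hY1b' ω) (by linarith)
  have hmain : (∫ ω, (m1 (X ω) - m0 (X ω)) ∂P) = ∫ ω, (Y1 ω - Y0 ω) * (A1 ω - A0 ω) ∂P := by
    have e1 : ∫ ω, (m1 (X ω) - m0 (X ω)) ∂P = ∫ ω, (M1 (X ω) - M0 (X ω)) ∂P := by
      refine integral_congr_ae ?_
      filter_upwards [hM1ae, hM0ae] with ω h1 h0
      rw [h1, h0]
    have e2 : ∫ ω, (M1 (X ω) - M0 (X ω)) ∂P = ∫ ω, M1 (X ω) ∂P - ∫ ω, M0 (X ω) ∂P :=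
      integral_sub hM1int hM0int
    have e3 : ∫ ω, ((1 - A1 ω) * Y0 ω + A1 ω * Y1 ω) ∂P
          - ∫ ω, ((1 - A0 ω) * Y0 ω + A0 ω * Y1 ω) ∂P
        = ∫ ω, (Y1 ω - Y0 ω) * (A1 ω - A0 ω) ∂P := by
      rw [← integral_sub hI1 hI0]
      refine integral_congr_ae (Filter.Eventually.of_forall fun ω => ?_); ring
    rw [e1, e2, key1, key0, e3]
  -- part 2
  have hS1m : MeasurableSet {ω | A1 ω = 1 ∧ A0 ω = 0} :=
    (hA1 (measurableSet_singleton 1)).inter (hA0 (measurableSet_singleton 0))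
  have hS2m : MeasurableSet {ω | A1 ω = 0 ∧ A0 ω = 1} :=
    (hA1 (measurableSet_singleton 0)).inter (hA0 (measurableSet_singleton 1))
  have hindb : ∀ (T : Set Ω), ∀ ω, |T.indicator (fun ω => Y1 ω - Y0 ω) ω| ≤ Cb + Cb := by
    intro T ω
    by_cases hω : ω ∈ T
    · rw [Set.indicator_of_mem hω]
      calc |Y1 ω - Y0 ω| ≤ |Y1 ω| + |Y0 ω| := abs_sub _ _
        _ ≤ Cb + Cb := add_le_add (hY1b' ω) (hY0b' ω)
    · rw [Set.indicator_of_notMem hω]; simp; positivity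
  have hJ1 : Integrable ({ω | A1 ω = 1 ∧ A0 ω = 0}.indicator (fun ω => Y1 ω - Y0 ω)) P :=
    ibd ((hY1.sub hY0).indicator hS1m) (hindb _)
  have hJ2 : Integrable ({ω | A1 ω = 0 ∧ A0 ω = 1}.indicator (fun ω => Y1 ω - Y0 ω)) P :=
    ibd ((hY1.sub hY0).indicator hS2m) (hindb _)
  have hsplit : ∫ ω, (Y1 ω - Y0 ω) * (A1 ω - A0 ω) ∂P
      = (∫ ω in {ω | A1 ω = 1 ∧ A0 ω = 0}, (Y1 ω - Y0 ω) ∂P)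
        - ∫ ω in {ω | A1 ω = 0 ∧ A0 ω = 1}, (Y1 ω - Y0 ω) ∂P := by
    rw [← integral_indicator hS1m, ← integral_indicator hS2m, ← integral_sub hJ1 hJ2]
    refine integral_congr_ae (Filter.Eventually.of_forall fun ω => ?_)
    beta_reduce
    rcases hA0_01 ω with h0 | h0 <;> rcases hA1_01 ω with h1 | h1
    · have n1 : ω ∉ {ω | A1 ω = 1 ∧ A0 ω = 0} := by simp [Set.mem_setOf_eq, h1]
      have n2 : ω ∉ {ω | A1 ω = 0 ∧ A0 ω = 1} := by simp [Set.mem_setOf_eq, h0]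
      rw [Set.indicator_of_notMem n1, Set.indicator_of_notMem n2, h0, h1]; ring
    · have n1 : ω ∈ {ω | A1 ω = 1 ∧ A0 ω = 0} := ⟨h1, h0⟩
      have n2 : ω ∉ {ω | A1 ω = 0 ∧ A0 ω = 1} := by simp [Set.mem_setOf_eq, h1]
      rw [Set.indicator_of_mem n1, Set.indicator_of_notMem n2, h0, h1]; ring
    · have n1 : ω ∉ {ω | A1 ω = 1 ∧ A0 ω = 0} := by simp [Set.mem_setOf_eq, h1]
      have n2 : ω ∈ {ω | A1 ω = 0 ∧ A0 ω = 1} := ⟨h1, h0⟩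
      rw [Set.indicator_of_notMem n1, Set.indicator_of_mem n2, h0, h1]; ring
    · have n1 : ω ∉ {ω | A1 ω = 1 ∧ A0 ω = 0} := by simp [Set.mem_setOf_eq, h0]
      have n2 : ω ∉ {ω | A1 ω = 0 ∧ A0 ω = 1} := by simp [Set.mem_setOf_eq, h1]
      rw [Set.indicator_of_notMem n1, Set.indicator_of_notMem n2, h0, h1]; ring
  exact ⟨hmain, hmain.trans hsplit⟩
end

section
/- Without assuming monotonicity, the covariate-adjusted intention-to-treat contrast on the treatment identifies the difference of the complier and defier proportions: Δ0 := E[ℓ1(X) − ℓ0(X)] = P(A1 > A0) − P(A1 < A0). -/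
open MeasureTheory ProbabilityTheory
lemma bdd_integrable {Ω : Type*} [MeasurableSpace Ω] {P : Measure Ω} [IsFiniteMeasure P]
    {f : Ω → ℝ} (hf : Measurable f) (C : ℝ) (hb : ∀ ω, |f ω| ≤ C) :
    Integrable f P :=
  ⟨hf.aestronglyMeasurable, HasFiniteIntegral.of_bounded (C := C)
    (Filter.Eventually.of_forall (fun ω => by simpa [Real.norm_eq_abs] using hb ω))⟩

lemma aux_ae {Ω : Type*} [MeasurableSpace Ω] (P : Measure Ω) [IsProbabilityMeasure P]
    (W f D : Ω → ℝ) (hW : Measurable W) (hf : Measurable f) (hD : Measurable D)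
    (hW01 : ∀ ω, W ω = 0 ∨ W ω = 1) (hD01 : ∀ ω, 0 ≤ D ω ∧ D ω ≤ 1)
    (h : ∀ n : ℕ, ∫ ω, D ω * W ω * (if 1 < f ω ∧ f ω ≤ n then (1:ℝ) else 0) ∂P
        = ∫ ω, f ω * W ω * (if 1 < f ω ∧ f ω ≤ n then (1:ℝ) else 0) ∂P) :
    ∀ᵐ ω ∂P, ¬(W ω = 1 ∧ 1 < f ω) := by
  have hWnn : ∀ ω, 0 ≤ W ω ∧ W ω ≤ 1 := fun ω => by rcases hW01 ω with h'|h' <;> simp [h']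
  have key : ∀ n : ℕ, ∀ᵐ ω ∂P,
      (f ω - D ω) * W ω * (if 1 < f ω ∧ f ω ≤ n then (1:ℝ) else 0) = 0 := by
    intro n
    set ind : Ω → ℝ := fun ω => if 1 < f ω ∧ f ω ≤ n then (1:ℝ) else 0 with hind
    have hmset : MeasurableSet {ω | 1 < f ω ∧ f ω ≤ (n:ℝ)} :=
      (measurableSet_lt measurable_const hf).inter (measurableSet_le hf measurable_const)
    have hmind : Measurable ind := Measurable.ite hmset measurable_const measurable_const
    have hindb : ∀ ω, 0 ≤ ind ω ∧ ind ω ≤ 1 := fun ω => by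
      by_cases hc : 1 < f ω ∧ f ω ≤ (n:ℝ) <;> simp [ind, hc]
    have hnn : ∀ ω, 0 ≤ (f ω - D ω) * W ω * ind ω := by
      intro ω
      by_cases hc : 1 < f ω ∧ f ω ≤ (n:ℝ)
      · have h1 : 0 ≤ f ω - D ω := by linarith [(hD01 ω).2, hc.1]
        exact mul_nonneg (mul_nonneg h1 (hWnn ω).1) (hindb ω).1
      · simp [ind, hc]
    have hint1 : Integrable (fun ω => D ω * W ω * ind ω) P := by
      refine bdd_integrable ((hD.mul hW).mul hmind) 1 (fun ω => ?_)
      have hD1 : |D ω| ≤ 1 := by rw [abs_le]; constructor <;> linarith [(hD01 ω).1, (hD01 ω).2]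
      have hW1 : |W ω| ≤ 1 := by rw [abs_le]; constructor <;> linarith [(hWnn ω).1, (hWnn ω).2]
      have hI1 : |ind ω| ≤ 1 := by rw [abs_le]; constructor <;> linarith [(hindb ω).1, (hindb ω).2]
      calc |D ω * W ω * ind ω| = |D ω| * |W ω| * |ind ω| := by rw [abs_mul, abs_mul]
        _ ≤ 1 * 1 * 1 := mul_le_mul (mul_le_mul hD1 hW1 (abs_nonneg _) zero_le_one) hI1 (abs_nonneg _) (by norm_num)
        _ = 1 := by ring
    have hint2 : Integrable (fun ω => f ω * W ω * ind ω) P := by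
      refine bdd_integrable ((hf.mul hW).mul hmind) n (fun ω => ?_)
      by_cases hc : 1 < f ω ∧ f ω ≤ (n:ℝ)
      · have h1 : |f ω| ≤ (n:ℝ) := by
          rw [abs_of_pos (by linarith [hc.1])]; exact hc.2
        have hW1 : |W ω| ≤ 1 := by rw [abs_le]; constructor <;> linarith [(hWnn ω).1, (hWnn ω).2]
        have hI1 : |ind ω| ≤ 1 := by rw [abs_le]; constructor <;> linarith [(hindb ω).1, (hindb ω).2]
        calc |f ω * W ω * ind ω| = |f ω| * |W ω| * |ind ω| := by rw [abs_mul, abs_mul]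
          _ ≤ (n:ℝ) * 1 * 1 := mul_le_mul (mul_le_mul h1 hW1 (abs_nonneg _) n.cast_nonneg) hI1 (abs_nonneg _) (by positivity)
          _ = n := by ring
      · simp [ind, hc]
    have hrw : (fun ω => (f ω - D ω) * W ω * ind ω)
        = fun ω => f ω * W ω * ind ω - D ω * W ω * ind ω := funext fun ω => by ring
    have hzero : ∫ ω, (f ω - D ω) * W ω * ind ω ∂P = 0 := by
      rw [hrw, integral_sub hint2 hint1, ← h n, sub_self]
    have hintd : Integrable (fun ω => (f ω - D ω) * W ω * ind ω) P := by
      rw [hrw]; exact hint2.sub hint1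
    have := (integral_eq_zero_iff_of_nonneg hnn hintd).mp hzero
    filter_upwards [this] with ω hω
    exact hω
  have hall := ae_all_iff.mpr key
  filter_upwards [hall] with ω hω
  rintro ⟨hW1, hf1⟩
  have hn := hω (Nat.ceil (f ω))
  rw [if_pos ⟨hf1, Nat.le_ceil _⟩, hW1] at hn
  have h2 := (hD01 ω).2
  nlinarith

lemma aux_ind {Ω S : Type*} [MeasurableSpace Ω] [MeasurableSpace S] (P : Measure Ω)
    [IsProbabilityMeasure P] (X : Ω → S) (hX : Measurable X)
    (W : Ω → ℝ) (hW : Measurable W) (hW01 : ∀ ω, W ω = 0 ∨ W ω = 1)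
    (eW : S → ℝ) (heW : Measurable eW) (ε : ℝ) (hε : 0 < ε) (heb : ∀ x, ε ≤ eW x ∧ eW x ≤ 1)
    (hVeW : ∀ g : S → ℝ, Measurable g → (∃ C, ∀ x, |g x| ≤ C) →
      ∫ ω, W ω * g (X ω) ∂P = ∫ ω, eW (X ω) * g (X ω) ∂P)
    (T : Set S) (hT : MeasurableSet T)
    (h : ∀ᵐ ω ∂P, ¬(W ω = 1 ∧ X ω ∈ T)) :
    ∀ᵐ ω ∂P, X ω ∉ T := by
  set g : S → ℝ := T.indicator (fun _ => 1) with hg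
  have hgm : Measurable g := measurable_const.indicator hT
  have hgb : ∀ x, 0 ≤ g x ∧ g x ≤ 1 := fun x => by
    by_cases hc : x ∈ T <;> simp [g, Set.indicator_apply, hc]
  have hW0 : ∀ᵐ ω ∂P, W ω * g (X ω) = 0 := by
    filter_upwards [h] with ω hω
    rcases hW01 ω with h'|h'
    · simp [h']
    · have hnT : X ω ∉ T := fun hc => hω ⟨h', hc⟩
      simp [h', g, Set.indicator_apply, hnT]
  have hz : ∫ ω, eW (X ω) * g (X ω) ∂P = 0 := by
    rw [← hVeW g hgm ⟨1, fun x => by rw [abs_le]; constructor <;> linarith [(hgb x).1, (hgb x).2]⟩]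
    exact integral_eq_zero_of_ae hW0
  have hnn : ∀ ω, 0 ≤ eW (X ω) * g (X ω) := fun ω =>
    mul_nonneg (by linarith [(heb (X ω)).1]) (hgb (X ω)).1
  have hinte : Integrable (fun ω => eW (X ω) * g (X ω)) P := by
    refine bdd_integrable ((heW.comp hX).mul (hgm.comp hX)) 1 (fun ω => ?_)
    rw [abs_mul]
    calc |eW (X ω)| * |g (X ω)| ≤ 1 * 1 := by
          gcongr <;> rw [abs_le] <;>
            constructor <;> linarith [(heb (X ω)).1, (heb (X ω)).2, (hgb (X ω)).1, (hgb (X ω)).2]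
      _ = 1 := by ring
  have := (integral_eq_zero_iff_of_nonneg hnn hinte).mp hz
  filter_upwards [this] with ω hω
  intro hmem
  have h1 : eW (X ω) * g (X ω) = 0 := by simpa using hω
  have h2 : g (X ω) = 1 := by simp [g, Set.indicator_apply, hmem]
  have h3 : (0:ℝ) < eW (X ω) := by linarith [(heb (X ω)).1]
  rw [h2, mul_one] at h1
  linarith

lemma aux_bound {Ω S : Type*} [MeasurableSpace Ω] [MeasurableSpace S] (P : Measure Ω)
    [IsProbabilityMeasure P] (X : Ω → S) (hX : Measurable X)
    (W Aa : Ω → ℝ) (hW : Measurable W) (hAa : Measurable Aa)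
    (hW01 : ∀ ω, W ω = 0 ∨ W ω = 1) (hA01 : ∀ ω, 0 ≤ Aa ω ∧ Aa ω ≤ 1)
    (eW : S → ℝ) (heW : Measurable eW) (ε : ℝ) (hε : 0 < ε) (heb : ∀ x, ε ≤ eW x ∧ eW x ≤ 1)
    (hVeW : ∀ g : S → ℝ, Measurable g → (∃ C, ∀ x, |g x| ≤ C) →
      ∫ ω, W ω * g (X ω) ∂P = ∫ ω, eW (X ω) * g (X ω) ∂P)
    (l : S → ℝ) (hl : Measurable l)
    (hlv : ∀ g : S → ℝ, Measurable g → (∃ C, ∀ x, |g x| ≤ C) →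
      ∫ ω, Aa ω * W ω * g (X ω) ∂P = ∫ ω, l (X ω) * W ω * g (X ω) ∂P) :
    ∀ᵐ ω ∂P, 0 ≤ l (X ω) ∧ l (X ω) ≤ 1 := by
  -- upper bound
  have hup : ∀ᵐ ω ∂P, ¬(W ω = 1 ∧ 1 < l (X ω)) := by
    refine aux_ae P W (fun ω => l (X ω)) Aa hW (hl.comp hX) hAa hW01 hA01 (fun n => ?_)
    have hgm : Measurable (fun x => if 1 < l x ∧ l x ≤ (n:ℝ) then (1:ℝ) else 0) :=
      Measurable.ite ((measurableSet_lt measurable_const hl).inter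
        (measurableSet_le hl measurable_const)) measurable_const measurable_const
    have hgb : ∃ C, ∀ x, |if 1 < l x ∧ l x ≤ (n:ℝ) then (1:ℝ) else 0| ≤ C :=
      ⟨1, fun x => by by_cases hc : 1 < l x ∧ l x ≤ (n:ℝ) <;> simp [hc]⟩
    exact hlv _ hgm hgb
  -- lower bound, via f' = 1 - l, D' = 1 - Aa
  have hlow : ∀ᵐ ω ∂P, ¬(W ω = 1 ∧ 1 < 1 - l (X ω)) := by
    refine aux_ae P W (fun ω => 1 - l (X ω)) (fun ω => 1 - Aa ω) hW
      (measurable_const.sub (hl.comp hX)) (measurable_const.sub hAa) hW01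
      (fun ω => ⟨show (0:ℝ) ≤ 1 - Aa ω by linarith [(hA01 ω).2],
        show (1:ℝ) - Aa ω ≤ 1 by linarith [(hA01 ω).1]⟩) (fun n => ?_)
    set g : S → ℝ := fun x => if 1 < 1 - l x ∧ 1 - l x ≤ (n:ℝ) then (1:ℝ) else 0 with hgdef
    have hgm : Measurable g :=
      Measurable.ite ((measurableSet_lt measurable_const (measurable_const.sub hl)).inter
        (measurableSet_le (measurable_const.sub hl) measurable_const)) measurable_const
        measurable_const
    have hgb : ∀ x, 0 ≤ g x ∧ g x ≤ 1 := fun x => by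
      by_cases hc : 1 < 1 - l x ∧ 1 - l x ≤ (n:ℝ)
      · have : g x = 1 := by simp only [hgdef]; rw [if_pos hc]
        rw [this]; norm_num
      · have : g x = 0 := by simp only [hgdef]; rw [if_neg hc]
        rw [this]; norm_num
    have hgbd : ∃ C, ∀ x, |g x| ≤ C :=
      ⟨1, fun x => by rw [abs_le]; constructor <;> linarith [(hgb x).1, (hgb x).2]⟩
    have hkey := hlv g hgm hgbd
    have hWb : ∀ ω, 0 ≤ W ω ∧ W ω ≤ 1 := fun ω => by rcases hW01 ω with h'|h' <;> simp [h']
    -- integrabilities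
    have i1 : Integrable (fun ω => W ω * g (X ω)) P := by
      refine bdd_integrable (hW.mul (hgm.comp hX)) 1 (fun ω => ?_)
      calc |W ω * g (X ω)| = |W ω| * |g (X ω)| := abs_mul _ _
        _ ≤ 1 * 1 := mul_le_mul (by rw [abs_le]; constructor <;> linarith [(hWb ω).1, (hWb ω).2])
            (by rw [abs_le]; constructor <;> linarith [(hgb (X ω)).1, (hgb (X ω)).2])
            (abs_nonneg _) (by norm_num)
        _ = 1 := by ring
    have i2 : Integrable (fun ω => Aa ω * W ω * g (X ω)) P := by
      refine bdd_integrable ((hAa.mul hW).mul (hgm.comp hX)) 1 (fun ω => ?_)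
      calc |Aa ω * W ω * g (X ω)| = |Aa ω| * |W ω| * |g (X ω)| := by rw [abs_mul, abs_mul]
        _ ≤ 1 * 1 * 1 := mul_le_mul (mul_le_mul
            (by rw [abs_le]; constructor <;> linarith [(hA01 ω).1, (hA01 ω).2])
            (by rw [abs_le]; constructor <;> linarith [(hWb ω).1, (hWb ω).2])
            (abs_nonneg _) (by norm_num))
            (by rw [abs_le]; constructor <;> linarith [(hgb (X ω)).1, (hgb (X ω)).2])
            (abs_nonneg _) (by norm_num)
        _ = 1 := by ring
    have i3 : Integrable (fun ω => l (X ω) * W ω * g (X ω)) P := by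
      refine bdd_integrable ((( hl.comp hX).mul hW).mul (hgm.comp hX)) n (fun ω => ?_)
      by_cases hc : 1 < 1 - l (X ω) ∧ 1 - l (X ω) ≤ (n:ℝ)
      · have hl1 : |l (X ω)| ≤ (n:ℝ) := by
          rw [abs_le]; constructor <;> [linarith [hc.2]; linarith [hc.1, n.cast_nonneg (α := ℝ)]]
        calc |l (X ω) * W ω * g (X ω)| = |l (X ω)| * |W ω| * |g (X ω)| := by rw [abs_mul, abs_mul]
          _ ≤ (n:ℝ) * 1 * 1 := mul_le_mul (mul_le_mul hl1
              (by rw [abs_le]; constructor <;> linarith [(hWb ω).1, (hWb ω).2])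
              (abs_nonneg _) n.cast_nonneg)
              (by rw [abs_le]; constructor <;> linarith [(hgb (X ω)).1, (hgb (X ω)).2])
              (abs_nonneg _) (by positivity)
          _ = n := by ring
      · have : g (X ω) = 0 := by simp only [hgdef]; rw [if_neg hc]
        rw [this, mul_zero, abs_zero]; positivity
    have e2 : ∫ ω, (1 - Aa ω) * W ω * g (X ω) ∂P
        = ∫ ω, W ω * g (X ω) ∂P - ∫ ω, Aa ω * W ω * g (X ω) ∂P := by
      rw [← integral_sub i1 i2]
      congr 1; funext ω; ring
    have e3 : ∫ ω, (1 - l (X ω)) * W ω * g (X ω) ∂P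
        = ∫ ω, W ω * g (X ω) ∂P - ∫ ω, l (X ω) * W ω * g (X ω) ∂P := by
      rw [← integral_sub i1 i3]
      congr 1; funext ω; ring
    rw [e2, e3, hkey]
  -- convert via the indicator argument
  have hub : ∀ᵐ ω ∂P, X ω ∉ {x | 1 < l x} := by
    refine aux_ind P X hX W hW hW01 eW heW ε hε heb hVeW _ (measurableSet_lt measurable_const hl) ?_
    exact hup
  have hlb : ∀ᵐ ω ∂P, X ω ∉ {x | l x < 0} := by
    refine aux_ind P X hX W hW hW01 eW heW ε hε heb hVeW _ (measurableSet_lt hl measurable_const) ?_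
    filter_upwards [hlow] with ω hω
    rintro ⟨h1, h2⟩
    have h2' : l (X ω) < 0 := h2
    exact hω ⟨h1, by linarith⟩
  filter_upwards [hub, hlb] with ω h1 h2
  have h1' : ¬ (1 < l (X ω)) := h1
  have h2' : ¬ (l (X ω) < 0) := h2
  exact ⟨le_of_not_gt h2', le_of_not_gt h1'⟩

lemma clamp_bound (t : ℝ) : |max 0 (min 1 t)| ≤ 1 := by
  rw [abs_of_nonneg (le_max_left _ _)]
  exact max_le zero_le_one (min_le_left _ _)

lemma inv_bound {a ε : ℝ} (hε : 0 < ε) (h : ε ≤ a) : |a⁻¹| ≤ ε⁻¹ := by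
  have ha : 0 < a := lt_of_lt_of_le hε h
  rw [abs_of_pos (inv_pos.mpr ha)]
  exact inv_anti₀ hε h

lemma prod3_bound {a b c C : ℝ} (ha : |a| ≤ 1) (hb : |b| ≤ 1) (hc : |c| ≤ C) :
    |a * b * c| ≤ C := by
  calc |a * b * c| = |a| * |b| * |c| := by rw [abs_mul, abs_mul]
    _ ≤ 1 * 1 * C := mul_le_mul (mul_le_mul ha hb (abs_nonneg b) zero_le_one) hc
        (abs_nonneg c) (by norm_num)
    _ = C := by ring

/-- Without monotonicity, Δ0 := E[ℓ1(X) − ℓ0(X)] = P(A1 > A0) − P(A1 < A0). -/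
theorem stmt_3
    {Ω : Type*} [MeasurableSpace Ω] (P : Measure Ω) [IsProbabilityMeasure P]
    {S : Type*} [mS : MeasurableSpace S]
    (X : Ω → S) (hX : Measurable X)
    (Z A0 A1 Y0 Y1 : Ω → ℝ)
    (hZ : Measurable Z) (hA0 : Measurable A0) (hA1 : Measurable A1)
    (hY0 : Measurable Y0) (hY1 : Measurable Y1)
    (hZ01 : ∀ ω, Z ω = 0 ∨ Z ω = 1)
    (hA0_01 : ∀ ω, A0 ω = 0 ∨ A0 ω = 1)
    (hA1_01 : ∀ ω, A1 ω = 0 ∨ A1 ω = 1)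
    (hY0b : ∃ C, ∀ ω, |Y0 ω| ≤ C) (hY1b : ∃ C, ∀ ω, |Y1 ω| ≤ C)
    (A Y : Ω → ℝ)
    (hA : A = fun ω => (1 - Z ω) * A0 ω + Z ω * A1 ω)
    (hY : Y = fun ω => (1 - A ω) * Y0 ω + A ω * Y1 ω)
    (e : S → ℝ) (he : Measurable e) (ε : ℝ) (hε : 0 < ε) (hε2 : ε < 1/2)
    (hebd : ∀ x, ε ≤ e x ∧ e x ≤ 1 - ε)
    (hVe : ∀ g : S → ℝ, Measurable g → (∃ C, ∀ x, |g x| ≤ C) →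
      ∫ ω, Z ω * g (X ω) ∂P = ∫ ω, e (X ω) * g (X ω) ∂P)
    (hUnconf : ∀ ψ : ℝ × ℝ × ℝ × ℝ → ℝ, Measurable ψ → (∃ C, ∀ v, |ψ v| ≤ C) →
      ∀ g : S → ℝ, Measurable g → (∃ C, ∀ x, |g x| ≤ C) →
      ∫ ω, Z ω * ψ (A0 ω, A1 ω, Y0 ω, Y1 ω) * g (X ω) ∂P
        = ∫ ω, e (X ω) * ψ (A0 ω, A1 ω, Y0 ω, Y1 ω) * g (X ω) ∂P)
    (l0 l1 : S → ℝ) (hl0 : Measurable l0) (hl1 : Measurable l1)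
    (hl0v : ∀ g : S → ℝ, Measurable g → (∃ C, ∀ x, |g x| ≤ C) →
      ∫ ω, A ω * (if Z ω = 0 then (1:ℝ) else 0) * g (X ω) ∂P
        = ∫ ω, l0 (X ω) * (if Z ω = 0 then (1:ℝ) else 0) * g (X ω) ∂P)
    (hl1v : ∀ g : S → ℝ, Measurable g → (∃ C, ∀ x, |g x| ≤ C) →
      ∫ ω, A ω * (if Z ω = 1 then (1:ℝ) else 0) * g (X ω) ∂P
        = ∫ ω, l1 (X ω) * (if Z ω = 1 then (1:ℝ) else 0) * g (X ω) ∂P) :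
    (∫ ω, (l1 (X ω) - l0 (X ω)) ∂P)
      = (P {ω | A1 ω = 1 ∧ A0 ω = 0}).toReal - (P {ω | A1 ω = 0 ∧ A0 ω = 1}).toReal := by
  -- basic facts
  have hApos : ∀ ω, 0 ≤ A ω ∧ A ω ≤ 1 := by
    intro ω
    rcases hZ01 ω with h|h <;> rcases hA0_01 ω with h0|h0 <;> rcases hA1_01 ω with h1|h1 <;>
      constructor <;> norm_num [hA, h, h0, h1]
  have hAm : Measurable A := by
    rw [hA]; exact ((measurable_const.sub hZ).mul hA0).add (hZ.mul hA1)
  have hepos : ∀ x, (0:ℝ) < e x := fun x => lt_of_lt_of_le hε (hebd x).1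
  have hene : ∀ x, e x ≠ 0 := fun x => ne_of_gt (hepos x)
  have h1epos : ∀ x, (0:ℝ) < 1 - e x := fun x => by linarith [(hebd x).2]
  have h1ene : ∀ x, (1:ℝ) - e x ≠ 0 := fun x => ne_of_gt (h1epos x)
  have h1elb : ∀ x, ε ≤ 1 - e x := fun x => by linarith [(hebd x).2]
  have heub : ∀ x, |e x| ≤ 1 := fun x => by
    rw [abs_of_pos (hepos x)]; linarith [(hebd x).2, hε.le]
  have hZb : ∀ ω, |Z ω| ≤ 1 := fun ω => by rcases hZ01 ω with h|h <;> norm_num [h]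
  -- the two weight functions
  have hW1m : Measurable (fun ω => if Z ω = 1 then (1:ℝ) else 0) :=
    Measurable.ite (hZ (measurableSet_singleton 1)) measurable_const measurable_const
  have hW0m : Measurable (fun ω => if Z ω = 0 then (1:ℝ) else 0) :=
    Measurable.ite (hZ (measurableSet_singleton 0)) measurable_const measurable_const
  have hW1Z : ∀ ω, (if Z ω = 1 then (1:ℝ) else 0) = Z ω := fun ω => by
    rcases hZ01 ω with h|h <;> norm_num [h]
  have hW0Z : ∀ ω, (if Z ω = 0 then (1:ℝ) else 0) = 1 - Z ω := fun ω => by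
    rcases hZ01 ω with h|h <;> norm_num [h]
  have hW101 : ∀ ω, (if Z ω = 1 then (1:ℝ) else 0) = 0 ∨ (if Z ω = 1 then (1:ℝ) else 0) = 1 :=
    fun ω => by rcases hZ01 ω with h|h <;> norm_num [h]
  have hW001 : ∀ ω, (if Z ω = 0 then (1:ℝ) else 0) = 0 ∨ (if Z ω = 0 then (1:ℝ) else 0) = 1 :=
    fun ω => by rcases hZ01 ω with h|h <;> norm_num [h]
  -- version properties for the two weights
  have hVe1 : ∀ g : S → ℝ, Measurable g → (∃ C, ∀ x, |g x| ≤ C) →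
      ∫ ω, (if Z ω = 1 then (1:ℝ) else 0) * g (X ω) ∂P = ∫ ω, e (X ω) * g (X ω) ∂P := by
    intro g hg hgb
    rw [show (fun ω => (if Z ω = 1 then (1:ℝ) else 0) * g (X ω)) = fun ω => Z ω * g (X ω) from
      funext fun ω => by rw [hW1Z]]
    exact hVe g hg hgb
  have hVe0 : ∀ g : S → ℝ, Measurable g → (∃ C, ∀ x, |g x| ≤ C) →
      ∫ ω, (if Z ω = 0 then (1:ℝ) else 0) * g (X ω) ∂P
        = ∫ ω, (1 - e (X ω)) * g (X ω) ∂P := by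
    intro g hg hgb
    obtain ⟨C, hC⟩ := hgb
    have ig : Integrable (fun ω => g (X ω)) P := bdd_integrable (hg.comp hX) C (fun ω => hC _)
    have iZg : Integrable (fun ω => Z ω * g (X ω)) P := by
      refine bdd_integrable (hZ.mul (hg.comp hX)) C (fun ω => ?_)
      rw [abs_mul]
      nlinarith [hZb ω, hC (X ω), abs_nonneg (Z ω), abs_nonneg (g (X ω))]
    have ieg : Integrable (fun ω => e (X ω) * g (X ω)) P := by
      refine bdd_integrable ((he.comp hX).mul (hg.comp hX)) C (fun ω => ?_)
      rw [abs_mul]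
      nlinarith [heub (X ω), hC (X ω), abs_nonneg (e (X ω)), abs_nonneg (g (X ω))]
    calc ∫ ω, (if Z ω = 0 then (1:ℝ) else 0) * g (X ω) ∂P
        = ∫ ω, (g (X ω) - Z ω * g (X ω)) ∂P := by
          refine integral_congr_ae (Filter.Eventually.of_forall fun ω => ?_)
          beta_reduce
          rw [hW0Z]; ring
      _ = (∫ ω, g (X ω) ∂P) - ∫ ω, Z ω * g (X ω) ∂P := integral_sub ig iZg
      _ = (∫ ω, g (X ω) ∂P) - ∫ ω, e (X ω) * g (X ω) ∂P := by rw [hVe g hg ⟨C, hC⟩]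
      _ = ∫ ω, (g (X ω) - e (X ω) * g (X ω)) ∂P := (integral_sub ig ieg).symm
      _ = ∫ ω, (1 - e (X ω)) * g (X ω) ∂P := by
          refine integral_congr_ae (Filter.Eventually.of_forall fun ω => ?_); ring
  -- a.e. bounds on l1∘X and l0∘X
  have hbd1 : ∀ᵐ ω ∂P, 0 ≤ l1 (X ω) ∧ l1 (X ω) ≤ 1 :=
    aux_bound P X hX _ A hW1m hAm hW101 hApos e he ε hε
      (fun x => ⟨(hebd x).1, by linarith [(hebd x).2, hε.le]⟩) hVe1 l1 hl1
      (fun g hg hgb => hl1v g hg hgb)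
  have hbd0 : ∀ᵐ ω ∂P, 0 ≤ l0 (X ω) ∧ l0 (X ω) ≤ 1 :=
    aux_bound P X hX _ A hW0m hAm hW001 hApos (fun x => 1 - e x)
      (measurable_const.sub he) ε hε (fun x => ⟨h1elb x, show (1:ℝ) - e x ≤ 1 by linarith [hepos x]⟩) hVe0 l0 hl0
      (fun g hg hgb => hl0v g hg hgb)
  -- clamped versions
  set m1 : S → ℝ := fun x => max 0 (min 1 (l1 x)) with hm1def
  set m0 : S → ℝ := fun x => max 0 (min 1 (l0 x)) with hm0def
  have hm1m : Measurable m1 := measurable_const.max (measurable_const.min hl1)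
  have hm0m : Measurable m0 := measurable_const.max (measurable_const.min hl0)
  have hm1b : ∀ x, |m1 x| ≤ 1 := fun x => clamp_bound _
  have hm0b : ∀ x, |m0 x| ≤ 1 := fun x => clamp_bound _
  have hae1 : ∀ᵐ ω ∂P, m1 (X ω) = l1 (X ω) := by
    filter_upwards [hbd1] with ω h
    simp only [hm1def]
    rw [min_eq_right h.2, max_eq_right h.1]
  have hae0 : ∀ᵐ ω ∂P, m0 (X ω) = l0 (X ω) := by
    filter_upwards [hbd0] with ω h
    simp only [hm0def]
    rw [min_eq_right h.2, max_eq_right h.1]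
  -- E1 : ∫ m1(X) = ∫ A1
  have ginv1b : ∀ x, |(e x)⁻¹| ≤ ε⁻¹ := fun x => inv_bound hε (hebd x).1
  have E1 : ∫ ω, m1 (X ω) ∂P = ∫ ω, A1 ω ∂P := by
    have gm : Measurable (fun x => m1 x * (e x)⁻¹) := hm1m.mul he.inv
    have gb : ∀ x, |m1 x * (e x)⁻¹| ≤ ε⁻¹ := fun x => by
      rw [abs_mul]
      nlinarith [hm1b x, ginv1b x, abs_nonneg (m1 x), abs_nonneg ((e x)⁻¹)]
    have ψm : Measurable (fun v : ℝ×ℝ×ℝ×ℝ => max 0 (min 1 v.2.1)) :=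
      measurable_const.max (measurable_const.min (measurable_fst.comp measurable_snd))
    calc ∫ ω, m1 (X ω) ∂P
        = ∫ ω, e (X ω) * (m1 (X ω) * (e (X ω))⁻¹) ∂P := by
          refine integral_congr_ae (Filter.Eventually.of_forall fun ω => ?_)
          beta_reduce
          rw [mul_comm (m1 (X ω)) ((e (X ω))⁻¹), ← mul_assoc,
            mul_inv_cancel₀ (hene (X ω)), one_mul]
      _ = ∫ ω, Z ω * (m1 (X ω) * (e (X ω))⁻¹) ∂P := (hVe _ gm ⟨ε⁻¹, gb⟩).symm
      _ = ∫ ω, Z ω * (l1 (X ω) * (e (X ω))⁻¹) ∂P := by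
          refine integral_congr_ae ?_
          filter_upwards [hae1] with ω h
          rw [h]
      _ = ∫ ω, l1 (X ω) * (if Z ω = 1 then (1:ℝ) else 0) * (e (X ω))⁻¹ ∂P := by
          refine integral_congr_ae (Filter.Eventually.of_forall fun ω => ?_)
          rcases hZ01 ω with h|h <;> norm_num [h] <;> try ring
      _ = ∫ ω, A ω * (if Z ω = 1 then (1:ℝ) else 0) * (e (X ω))⁻¹ ∂P :=
          (hl1v _ he.inv ⟨ε⁻¹, ginv1b⟩).symm
      _ = ∫ ω, Z ω * (max 0 (min 1 (A1 ω))) * (e (X ω))⁻¹ ∂P := by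
          refine integral_congr_ae (Filter.Eventually.of_forall fun ω => ?_)
          rcases hZ01 ω with h|h <;> rcases hA1_01 ω with h1|h1 <;> norm_num [hA, h, h1]
      _ = ∫ ω, e (X ω) * (max 0 (min 1 (A1 ω))) * (e (X ω))⁻¹ ∂P :=
          hUnconf _ ψm ⟨1, fun v => clamp_bound _⟩ _ he.inv ⟨ε⁻¹, ginv1b⟩
      _ = ∫ ω, A1 ω ∂P := by
          refine integral_congr_ae (Filter.Eventually.of_forall fun ω => ?_)
          rcases hA1_01 ω with h1|h1 <;> norm_num [h1] <;>
            field_simp [hene (X ω)]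
  -- E0 : ∫ m0(X) = ∫ A0
  have ginv0b : ∀ x, |(1 - e x)⁻¹| ≤ ε⁻¹ := fun x => inv_bound hε (h1elb x)
  have ginv0m : Measurable (fun x => (1 - e x)⁻¹) := (measurable_const.sub he).inv
  have E0 : ∫ ω, m0 (X ω) ∂P = ∫ ω, A0 ω ∂P := by
    have gm : Measurable (fun x => m0 x * (1 - e x)⁻¹) := hm0m.mul ginv0m
    have gb : ∀ x, |m0 x * (1 - e x)⁻¹| ≤ ε⁻¹ := fun x => by
      rw [abs_mul]
      nlinarith [hm0b x, ginv0b x, abs_nonneg (m0 x), abs_nonneg ((1 - e x)⁻¹)]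
    have ψm : Measurable (fun v : ℝ×ℝ×ℝ×ℝ => max 0 (min 1 v.1)) :=
      measurable_const.max (measurable_const.min measurable_fst)
    have hcA0m : Measurable (fun ω => max 0 (min 1 (A0 ω))) :=
      measurable_const.max (measurable_const.min hA0)
    have hcA0b : ∀ ω, |max 0 (min 1 (A0 ω))| ≤ 1 := fun ω => clamp_bound _
    have i1 : Integrable (fun ω => max 0 (min 1 (A0 ω)) * (1 - e (X ω))⁻¹) P := by
      refine bdd_integrable (hcA0m.mul (ginv0m.comp hX)) ε⁻¹ (fun ω => ?_)
      rw [abs_mul]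
      nlinarith [hcA0b ω, ginv0b (X ω), abs_nonneg (max 0 (min 1 (A0 ω))),
        abs_nonneg ((1 - e (X ω))⁻¹)]
    have i2 : Integrable (fun ω => Z ω * max 0 (min 1 (A0 ω)) * (1 - e (X ω))⁻¹) P := by
      refine bdd_integrable ((hZ.mul hcA0m).mul (ginv0m.comp hX)) ε⁻¹ (fun ω => ?_)
      exact prod3_bound (hZb ω) (hcA0b ω) (ginv0b (X ω))
    have i3 : Integrable (fun ω => e (X ω) * max 0 (min 1 (A0 ω)) * (1 - e (X ω))⁻¹) P := by
      refine bdd_integrable (((he.comp hX).mul hcA0m).mul (ginv0m.comp hX)) ε⁻¹ (fun ω => ?_)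
      exact prod3_bound (heub (X ω)) (hcA0b ω) (ginv0b (X ω))
    calc ∫ ω, m0 (X ω) ∂P
        = ∫ ω, (1 - e (X ω)) * (m0 (X ω) * (1 - e (X ω))⁻¹) ∂P := by
          refine integral_congr_ae (Filter.Eventually.of_forall fun ω => ?_)
          beta_reduce
          rw [mul_comm (m0 (X ω)) ((1 - e (X ω))⁻¹), ← mul_assoc,
            mul_inv_cancel₀ (h1ene (X ω)), one_mul]
      _ = ∫ ω, (if Z ω = 0 then (1:ℝ) else 0) * (m0 (X ω) * (1 - e (X ω))⁻¹) ∂P :=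
          (hVe0 _ gm ⟨ε⁻¹, gb⟩).symm
      _ = ∫ ω, (if Z ω = 0 then (1:ℝ) else 0) * (l0 (X ω) * (1 - e (X ω))⁻¹) ∂P := by
          refine integral_congr_ae ?_
          filter_upwards [hae0] with ω h
          rw [h]
      _ = ∫ ω, l0 (X ω) * (if Z ω = 0 then (1:ℝ) else 0) * (1 - e (X ω))⁻¹ ∂P := by
          refine integral_congr_ae (Filter.Eventually.of_forall fun ω => ?_)
          ring
      _ = ∫ ω, A ω * (if Z ω = 0 then (1:ℝ) else 0) * (1 - e (X ω))⁻¹ ∂P :=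
          (hl0v _ ginv0m ⟨ε⁻¹, ginv0b⟩).symm
      _ = ∫ ω, (max 0 (min 1 (A0 ω)) * (1 - e (X ω))⁻¹
            - Z ω * max 0 (min 1 (A0 ω)) * (1 - e (X ω))⁻¹) ∂P := by
          refine integral_congr_ae (Filter.Eventually.of_forall fun ω => ?_)
          rcases hZ01 ω with h|h <;> rcases hA0_01 ω with h0|h0 <;> norm_num [hA, h, h0]
      _ = (∫ ω, max 0 (min 1 (A0 ω)) * (1 - e (X ω))⁻¹ ∂P)
            - ∫ ω, Z ω * max 0 (min 1 (A0 ω)) * (1 - e (X ω))⁻¹ ∂P := integral_sub i1 i2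
      _ = (∫ ω, max 0 (min 1 (A0 ω)) * (1 - e (X ω))⁻¹ ∂P)
            - ∫ ω, e (X ω) * max 0 (min 1 (A0 ω)) * (1 - e (X ω))⁻¹ ∂P := by
          rw [hUnconf _ ψm ⟨1, fun v => clamp_bound _⟩ _ ginv0m ⟨ε⁻¹, ginv0b⟩]
      _ = ∫ ω, (max 0 (min 1 (A0 ω)) * (1 - e (X ω))⁻¹
            - e (X ω) * max 0 (min 1 (A0 ω)) * (1 - e (X ω))⁻¹) ∂P := (integral_sub i1 i3).symm
      _ = ∫ ω, A0 ω ∂P := by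
          refine integral_congr_ae (Filter.Eventually.of_forall fun ω => ?_)
          beta_reduce
          have : max 0 (min 1 (A0 ω)) * (1 - e (X ω))⁻¹
              - e (X ω) * max 0 (min 1 (A0 ω)) * (1 - e (X ω))⁻¹
              = (1 - e (X ω)) * (max 0 (min 1 (A0 ω)) * (1 - e (X ω))⁻¹) := by ring
          rw [this, mul_comm (max 0 (min 1 (A0 ω))) ((1 - e (X ω))⁻¹), ← mul_assoc,
            mul_inv_cancel₀ (h1ene (X ω)), one_mul]
          rcases hA0_01 ω with h0|h0 <;> norm_num [h0]
  -- final assembly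
  have ihm1 : Integrable (fun ω => m1 (X ω)) P := bdd_integrable (hm1m.comp hX) 1 (fun ω => hm1b _)
  have ihm0 : Integrable (fun ω => m0 (X ω)) P := bdd_integrable (hm0m.comp hX) 1 (fun ω => hm0b _)
  have iA1 : Integrable A1 P := bdd_integrable hA1 1
    (fun ω => by rcases hA1_01 ω with h|h <;> norm_num [h])
  have iA0 : Integrable A0 P := bdd_integrable hA0 1
    (fun ω => by rcases hA0_01 ω with h|h <;> norm_num [h])
  have hs1 : MeasurableSet {ω | A1 ω = 1 ∧ A0 ω = 0} :=
    (hA1 (measurableSet_singleton 1)).inter (hA0 (measurableSet_singleton 0))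
  have hs0 : MeasurableSet {ω | A1 ω = 0 ∧ A0 ω = 1} :=
    (hA1 (measurableSet_singleton 0)).inter (hA0 (measurableSet_singleton 1))
  have iic : Integrable ({ω | A1 ω = 1 ∧ A0 ω = 0}.indicator (fun _ => (1:ℝ))) P := by
    refine bdd_integrable (measurable_const.indicator hs1) 1 (fun ω => ?_)
    by_cases h : ω ∈ {ω | A1 ω = 1 ∧ A0 ω = 0} <;> simp [Set.indicator_apply, h]
  have iid : Integrable ({ω | A1 ω = 0 ∧ A0 ω = 1}.indicator (fun _ => (1:ℝ))) P := by
    refine bdd_integrable (measurable_const.indicator hs0) 1 (fun ω => ?_)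
    by_cases h : ω ∈ {ω | A1 ω = 0 ∧ A0 ω = 1} <;> simp [Set.indicator_apply, h]
  calc ∫ ω, (l1 (X ω) - l0 (X ω)) ∂P
      = ∫ ω, (m1 (X ω) - m0 (X ω)) ∂P := by
        refine integral_congr_ae ?_
        filter_upwards [hae1, hae0] with ω h1 h0
        rw [h1, h0]
    _ = (∫ ω, m1 (X ω) ∂P) - ∫ ω, m0 (X ω) ∂P := integral_sub ihm1 ihm0
    _ = (∫ ω, A1 ω ∂P) - ∫ ω, A0 ω ∂P := by rw [E1, E0]
    _ = ∫ ω, (A1 ω - A0 ω) ∂P := (integral_sub iA1 iA0).symm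
    _ = ∫ ω, ({ω | A1 ω = 1 ∧ A0 ω = 0}.indicator (fun _ => (1:ℝ)) ω
          - {ω | A1 ω = 0 ∧ A0 ω = 1}.indicator (fun _ => (1:ℝ)) ω) ∂P := by
        refine integral_congr_ae (Filter.Eventually.of_forall fun ω => ?_)
        rcases hA1_01 ω with h1|h1 <;> rcases hA0_01 ω with h0|h0 <;>
          norm_num [Set.indicator_apply, Set.mem_setOf_eq, h1, h0]
    _ = (∫ ω, {ω | A1 ω = 1 ∧ A0 ω = 0}.indicator (fun _ => (1:ℝ)) ω ∂P)
          - ∫ ω, {ω | A1 ω = 0 ∧ A0 ω = 1}.indicator (fun _ => (1:ℝ)) ω ∂P :=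
        integral_sub iic iid
    _ = (P {ω | A1 ω = 1 ∧ A0 ω = 0}).toReal - (P {ω | A1 ω = 0 ∧ A0 ω = 1}).toReal := by
        rw [integral_indicator_const _ hs1, integral_indicator_const _ hs0]
        simp
        rfl
end

section
/- (Identification of the conditional local average treatment effect, Lemma 2.) Let T be a measurable space, f : S → T measurable, and V := f ∘ X (a subvector of the covariates). Under unconfoundedness, positivity, and monotonicity, for every measurable set T0 ⊆ T such that P(V ∈ T0 and A1 > A0) > 0, one has E[(m1(X) − m0(X))·1{V ∈ T0}] / E[(ℓ1(X) − ℓ0(X))·1{V ∈ T0}] = E[Y1 − Y0 | A1 > A0, V ∈ T0], where the right-hand side is the conditional expectation of Y1 − Y0 given the event {A1 = 1, A0 = 0} ∩ {V ∈ T0}. -/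
open MeasureTheory ProbabilityTheory
open scoped Classical

namespace Stmt6Aux

variable {Ω : Type*} [MeasurableSpace Ω] {P : Measure Ω}

lemma intble [IsProbabilityMeasure P] {h : Ω → ℝ} (hm : Measurable h)
    (C : ℝ) (hb : ∀ ω, |h ω| ≤ C) : Integrable h P :=
  (integrable_const C).mono' hm.aestronglyMeasurable
    (ae_of_all _ fun ω => by simpa [Real.norm_eq_abs] using hb ω)

noncomputable def tr (c y : ℝ) : ℝ := max (min y c) (-c)

lemma tr_meas {c : ℝ} : Measurable (tr c) :=
  (measurable_id.min measurable_const).max measurable_const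

lemma abs_tr_le {c : ℝ} (hc : 0 ≤ c) (y : ℝ) : |tr c y| ≤ c := by
  rw [abs_le]
  exact ⟨le_max_right _ _, max_le (min_le_right _ _) (by linarith)⟩

lemma tr_eq {c y : ℝ} (h : |y| ≤ c) : tr c y = y := by
  rw [abs_le] at h
  rw [tr, min_eq_left h.2, max_eq_left h.1]

noncomputable def psi1 (C : ℝ) (v : ℝ × ℝ × ℝ × ℝ) : ℝ :=
  (1 - tr 1 v.2.1) * tr C v.2.2.1 + tr 1 v.2.1 * tr C v.2.2.2

noncomputable def psi0 (C : ℝ) (v : ℝ × ℝ × ℝ × ℝ) : ℝ :=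
  (1 - tr 1 v.1) * tr C v.2.2.1 + tr 1 v.1 * tr C v.2.2.2

noncomputable def phi1 (v : ℝ × ℝ × ℝ × ℝ) : ℝ := tr 1 v.2.1

noncomputable def phi0 (v : ℝ × ℝ × ℝ × ℝ) : ℝ := tr 1 v.1

lemma psi1_meas {C : ℝ} : Measurable (psi1 C) :=
  ((measurable_const.sub (tr_meas.comp measurable_snd.fst)).mul
      (tr_meas.comp measurable_snd.snd.fst)).add
    ((tr_meas.comp measurable_snd.fst).mul (tr_meas.comp measurable_snd.snd.snd))

lemma psi0_meas {C : ℝ} : Measurable (psi0 C) :=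
  ((measurable_const.sub (tr_meas.comp measurable_fst)).mul
      (tr_meas.comp measurable_snd.snd.fst)).add
    ((tr_meas.comp measurable_fst).mul (tr_meas.comp measurable_snd.snd.snd))

lemma phi1_meas : Measurable phi1 := tr_meas.comp measurable_snd.fst

lemma phi0_meas : Measurable phi0 := tr_meas.comp measurable_fst

lemma habs_aux {C t y0 y1 : ℝ} (hC : 0 ≤ C) (ht : |t| ≤ 1) (h0 : |y0| ≤ C)
    (h1 : |y1| ≤ C) : |(1 - t) * y0 + t * y1| ≤ 3 * C := by
  have ht' := abs_le.mp ht
  have h2 : |1 - t| ≤ 2 := abs_le.mpr ⟨by linarith, by linarith⟩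
  calc |(1 - t) * y0 + t * y1| ≤ |(1 - t) * y0| + |t * y1| := abs_add_le _ _
    _ = |1 - t| * |y0| + |t| * |y1| := by rw [abs_mul, abs_mul]
    _ ≤ 2 * C + 1 * C := add_le_add
        (mul_le_mul h2 h0 (abs_nonneg _) (by norm_num))
        (mul_le_mul ht h1 (abs_nonneg _) zero_le_one)
    _ = 3 * C := by ring

lemma psi1_bound {C : ℝ} (hC : 0 ≤ C) : ∀ v, |psi1 C v| ≤ 3 * C := fun v =>
  habs_aux hC (abs_tr_le zero_le_one _) (abs_tr_le hC _) (abs_tr_le hC _)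

lemma psi0_bound {C : ℝ} (hC : 0 ≤ C) : ∀ v, |psi0 C v| ≤ 3 * C := fun v =>
  habs_aux hC (abs_tr_le zero_le_one _) (abs_tr_le hC _) (abs_tr_le hC _)

lemma phi1_bound : ∀ v, |phi1 v| ≤ 1 := fun v => abs_tr_le zero_le_one _

lemma phi0_bound : ∀ v, |phi0 v| ≤ 1 := fun v => abs_tr_le zero_le_one _

lemma psi1_eval {C a0 a1 y0 y1 : ℝ} (h1 : |a1| ≤ 1) (h2 : |y0| ≤ C) (h3 : |y1| ≤ C) :
    psi1 C (a0, a1, y0, y1) = (1 - a1) * y0 + a1 * y1 := by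
  rw [psi1]; dsimp only; rw [tr_eq h1, tr_eq h2, tr_eq h3]

lemma psi0_eval {C a0 a1 y0 y1 : ℝ} (h1 : |a0| ≤ 1) (h2 : |y0| ≤ C) (h3 : |y1| ≤ C) :
    psi0 C (a0, a1, y0, y1) = (1 - a0) * y0 + a0 * y1 := by
  rw [psi0]; dsimp only; rw [tr_eq h1, tr_eq h2, tr_eq h3]

lemma phi1_eval {a0 a1 y0 y1 : ℝ} (h1 : |a1| ≤ 1) : phi1 (a0, a1, y0, y1) = a1 := by
  rw [phi1]; dsimp only; rw [tr_eq h1]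

lemma phi0_eval {a0 a1 y0 y1 : ℝ} (h1 : |a0| ≤ 1) : phi0 (a0, a1, y0, y1) = a0 := by
  rw [phi0]; dsimp only; rw [tr_eq h1]

lemma ae_eq_clamp [IsProbabilityMeasure P]
    {S : Type*} [MeasurableSpace S] {X : Ω → S} (hX : Measurable X)
    {W iz : Ω → ℝ} (hW : Measurable W) (hiz : Measurable iz)
    (hiz01 : ∀ ω, iz ω = 0 ∨ iz ω = 1)
    {C : ℝ} (hC : 0 ≤ C) (hWb : ∀ ω, |W ω| ≤ C)
    {b : S → ℝ} (hb : Measurable b)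
    (hv : ∀ g : S → ℝ, Measurable g → (∃ D, ∀ x, |g x| ≤ D) →
       ∫ ω, W ω * iz ω * g (X ω) ∂P = ∫ ω, b (X ω) * iz ω * g (X ω) ∂P)
    {w : S → ℝ} (hw : Measurable w) {ε : ℝ} (hε : 0 < ε)
    (hwε : ∀ x, ε ≤ w x) (hw1 : ∀ x, w x ≤ 1)
    (link : ∀ g : S → ℝ, Measurable g → (∃ D, ∀ x, |g x| ≤ D) →
       ∫ ω, iz ω * g (X ω) ∂P = ∫ ω, w (X ω) * g (X ω) ∂P) :
    ∀ᵐ ω ∂P, b (X ω) = tr C (b (X ω)) := by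
  have hiznn : ∀ ω, 0 ≤ iz ω := fun ω => by rcases hiz01 ω with h | h <;> simp [h]
  have hizle : ∀ ω, |iz ω| ≤ 1 := fun ω => by rcases hiz01 ω with h | h <;> simp [h]
  have key : ∀ n : ℕ, ∀ᵐ ω ∂P,
      ¬(iz ω = 1 ∧ C < |b (X ω)| ∧ |b (X ω)| ≤ C + (n + 1)) := by
    intro n
    set g : S → ℝ := fun x =>
      if C < |b x| ∧ |b x| ≤ C + (n + 1) then (if 0 ≤ b x then 1 else -1) else 0 with hgdef
    have hgm : Measurable g := by
      apply Measurable.ite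
      · exact (measurableSet_lt measurable_const hb.abs).inter
          (measurableSet_le hb.abs measurable_const)
      · exact Measurable.ite (measurableSet_le measurable_const hb) measurable_const
          measurable_const
      · exact measurable_const
    have hgb : ∀ x, |g x| ≤ 1 := by
      intro x; rw [hgdef]; dsimp only
      split_ifs <;> norm_num
    have hbg : ∀ x, |b x * g x| ≤ C + (n + 1) := by
      intro x; rw [hgdef]; dsimp only
      split_ifs with h1 h2
      · rw [abs_mul, abs_one, mul_one]; exact h1.2
      · rw [abs_mul, abs_neg, abs_one, mul_one]; exact h1.2
      · simp only [mul_zero, abs_zero]; positivity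
    have hWg : ∀ ω, |W ω * g (X ω)| ≤ C := by
      intro ω; rw [abs_mul]
      calc |W ω| * |g (X ω)| ≤ C * 1 :=
            mul_le_mul (hWb ω) (hgb (X ω)) (abs_nonneg _) hC
        _ = C := mul_one C
    set F : Ω → ℝ := fun ω => iz ω * (b (X ω) * g (X ω) - W ω * g (X ω)) with hFdef
    have hFm : Measurable F :=
      hiz.mul (((hb.comp hX).mul (hgm.comp hX)).sub (hW.mul (hgm.comp hX)))
    have hFb : ∀ ω, |F ω| ≤ 1 * (C + (n + 1) + C) := by
      intro ω
      rw [hFdef]; dsimp only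
      rw [abs_mul]
      refine mul_le_mul (hizle ω) ?_ (abs_nonneg _) zero_le_one
      calc |b (X ω) * g (X ω) - W ω * g (X ω)|
          ≤ |b (X ω) * g (X ω)| + |W ω * g (X ω)| := abs_sub _ _
        _ ≤ C + (n + 1) + C := add_le_add (hbg (X ω)) (hWg ω)
    have hFnn : ∀ ω, 0 ≤ F ω := by
      intro ω
      rcases hiz01 ω with h | h
      · simp [hFdef, h]
      · rw [hFdef]; dsimp only; rw [h, one_mul, hgdef]; dsimp only
        have hWle := abs_le.mp (hWb ω)
        split_ifs with h1 h2
        · have : |b (X ω)| = b (X ω) := abs_of_nonneg h2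
          simp only [mul_one]
          have := h1.1
          linarith
        · push_neg at h2
          have : |b (X ω)| = -(b (X ω)) := abs_of_neg h2
          have := h1.1
          simp only [mul_neg_one]
          linarith
        · simp
    have hFi : Integrable F P := intble hFm _ hFb
    have i1 : Integrable (fun ω => b (X ω) * iz ω * g (X ω)) P := by
      refine intble (((hb.comp hX).mul hiz).mul (hgm.comp hX)) (1 * (C + (n + 1))) ?_
      intro ω
      have : |b (X ω) * iz ω * g (X ω)| = |iz ω| * |b (X ω) * g (X ω)| := by
        rw [abs_mul, abs_mul, abs_mul]; ring
      rw [this]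
      exact mul_le_mul (hizle ω) (hbg (X ω)) (abs_nonneg _) zero_le_one
    have i2 : Integrable (fun ω => W ω * iz ω * g (X ω)) P := by
      refine intble ((hW.mul hiz).mul (hgm.comp hX)) (1 * C) ?_
      intro ω
      have : |W ω * iz ω * g (X ω)| = |iz ω| * |W ω * g (X ω)| := by
        rw [abs_mul, abs_mul, abs_mul]; ring
      rw [this]
      exact mul_le_mul (hizle ω) (hWg ω) (abs_nonneg _) zero_le_one
    have hF0 : ∫ ω, F ω ∂P = 0 := by
      have e1 := hv g hgm ⟨1, hgb⟩
      calc ∫ ω, F ω ∂P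
          = ∫ ω, (b (X ω) * iz ω * g (X ω) - W ω * iz ω * g (X ω)) ∂P := by
            refine integral_congr_ae (ae_of_all _ fun ω => ?_)
            rw [hFdef]; dsimp only; ring
        _ = (∫ ω, b (X ω) * iz ω * g (X ω) ∂P) - ∫ ω, W ω * iz ω * g (X ω) ∂P :=
            integral_sub i1 i2
        _ = 0 := by rw [← e1]; ring
    have haeF : F =ᵐ[P] 0 :=
      (integral_eq_zero_iff_of_nonneg (fun ω => hFnn ω) hFi).mp hF0
    filter_upwards [haeF] with ω hω
    rintro ⟨hiz1, hcond⟩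
    have hgx : g (X ω) = 1 ∨ g (X ω) = -1 := by
      rw [hgdef]; dsimp only; rw [if_pos hcond]
      split_ifs <;> simp
    have h0 : b (X ω) * g (X ω) - W ω * g (X ω) = 0 := by
      have h' : F ω = 0 := hω
      rw [hFdef] at h'; dsimp only at h'; rw [hiz1, one_mul] at h'
      exact h'
    have hbW : b (X ω) = W ω := by
      rcases hgx with h | h
      · rw [h, mul_one, mul_one, sub_eq_zero] at h0; exact h0
      · rw [h, mul_neg_one, mul_neg_one] at h0; linarith
    have := hWb ω
    rw [← hbW] at this
    exact absurd hcond.1 (not_lt.mpr this)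
  have key2 : ∀ᵐ ω ∂P, iz ω = 1 → |b (X ω)| ≤ C := by
    have hall := ae_all_iff.mpr key
    filter_upwards [hall] with ω hω hiz1
    by_contra hgt
    push_neg at hgt
    obtain ⟨n, hn⟩ := exists_nat_ge (|b (X ω)| - C)
    exact hω n ⟨hiz1, hgt, by push_cast; linarith⟩
  set h : S → ℝ := fun x => min |b x - tr C (b x)| 1 with hhdef
  have htrm : Measurable (tr C) := (measurable_id.min measurable_const).max measurable_const
  have hhm : Measurable h := ((hb.sub (htrm.comp hb)).abs).min measurable_const
  have hhnn : ∀ x, 0 ≤ h x := fun x => le_min (abs_nonneg _) one_pos.le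
  have hhb : ∀ x, |h x| ≤ 1 := fun x => by
    rw [abs_of_nonneg (hhnn x)]; exact min_le_right _ _
  have htr_eq : ∀ y : ℝ, |y| ≤ C → tr C y = y := by
    intro y hy; rw [abs_le] at hy
    rw [tr, min_eq_left hy.2, max_eq_left hy.1]
  have hizh : (fun ω => iz ω * h (X ω)) =ᵐ[P] 0 := by
    filter_upwards [key2] with ω hω
    rcases hiz01 ω with h1 | h1
    · simp [h1]
    · have heq : tr C (b (X ω)) = b (X ω) := htr_eq _ (hω h1)
      show iz ω * h (X ω) = 0
      rw [hhdef]; dsimp only; rw [heq]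
      simp
  have h1 : ∫ ω, iz ω * h (X ω) ∂P = 0 := by
    rw [integral_congr_ae hizh]; simp
  have h2 : ∫ ω, w (X ω) * h (X ω) ∂P = 0 := by
    rw [← link h hhm ⟨1, hhb⟩]; exact h1
  have h3 : (fun ω => w (X ω) * h (X ω)) =ᵐ[P] 0 := by
    refine (integral_eq_zero_iff_of_nonneg ?_ ?_).mp h2
    · intro ω
      exact mul_nonneg (le_trans hε.le (hwε _)) (hhnn _)
    · refine intble ((hw.comp hX).mul (hhm.comp hX)) 1 fun ω => ?_
      rw [abs_mul]
      have hw0 : |w (X ω)| ≤ 1 := by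
        rw [abs_of_pos (lt_of_lt_of_le hε (hwε _))]; exact hw1 _
      calc |w (X ω)| * |h (X ω)| ≤ 1 * 1 :=
            mul_le_mul hw0 (hhb (X ω)) (abs_nonneg _) zero_le_one
        _ = 1 := by norm_num
  filter_upwards [h3] with ω hω
  have hwne : w (X ω) ≠ 0 := ne_of_gt (lt_of_lt_of_le hε (hwε _))
  have hh0 : h (X ω) = 0 := by
    have h' : w (X ω) * h (X ω) = 0 := hω
    exact (mul_eq_zero.mp h').resolve_left hwne
  have habs0 : |b (X ω) - tr C (b (X ω))| = 0 := by
    by_contra hne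
    have hpos : 0 < |b (X ω) - tr C (b (X ω))| :=
      lt_of_le_of_ne (abs_nonneg _) (Ne.symm hne)
    have : 0 < h (X ω) := by
      rw [hhdef]; dsimp only; exact lt_min hpos one_pos
    exact absurd hh0 (ne_of_gt this)
  have := abs_eq_zero.mp habs0
  linarith [sub_eq_zero.mp this]


lemma transfer [IsProbabilityMeasure P]
    {S : Type*} [MeasurableSpace S] {X : Ω → S} (hX : Measurable X)
    {W iz : Ω → ℝ} (hW : Measurable W) (hiz : Measurable iz)
    (hiz01 : ∀ ω, iz ω = 0 ∨ iz ω = 1)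
    {C : ℝ} (hC : 0 ≤ C) (hWb : ∀ ω, |W ω| ≤ C)
    {b : S → ℝ} (hb : Measurable b)
    (hv : ∀ g : S → ℝ, Measurable g → (∃ D, ∀ x, |g x| ≤ D) →
       ∫ ω, W ω * iz ω * g (X ω) ∂P = ∫ ω, b (X ω) * iz ω * g (X ω) ∂P)
    {w : S → ℝ} (hw : Measurable w) {ε : ℝ} (hε : 0 < ε)
    (hwε : ∀ x, ε ≤ w x) (hw1 : ∀ x, w x ≤ 1)
    (link : ∀ g : S → ℝ, Measurable g → (∃ D, ∀ x, |g x| ≤ D) →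
       ∫ ω, iz ω * g (X ω) ∂P = ∫ ω, w (X ω) * g (X ω) ∂P)
    {V : Ω → ℝ}
    (hWiz : ∀ ω, W ω * iz ω = iz ω * V ω)
    (linkV : ∀ g : S → ℝ, Measurable g → (∃ D, ∀ x, |g x| ≤ D) →
       ∫ ω, iz ω * V ω * g (X ω) ∂P = ∫ ω, w (X ω) * V ω * g (X ω) ∂P)
    {g : S → ℝ} (hg : Measurable g) {D : ℝ} (hD : 0 ≤ D) (hgD : ∀ x, |g x| ≤ D) :
    (∀ᵐ ω ∂P, b (X ω) = tr C (b (X ω))) ∧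
    ∫ ω, b (X ω) * g (X ω) ∂P = ∫ ω, V ω * g (X ω) ∂P := by
  have hae := ae_eq_clamp hX hW hiz hiz01 hC hWb hb hv hw hε hwε hw1 link
  refine ⟨hae, ?_⟩
  set b' : S → ℝ := fun x => tr C (b x) with hb'def
  have hb'm : Measurable b' := tr_meas.comp hb
  have hb'C : ∀ x, |b' x| ≤ C := fun x => abs_tr_le hC _
  have hv' : ∀ g : S → ℝ, Measurable g → (∃ D, ∀ x, |g x| ≤ D) →
      ∫ ω, W ω * iz ω * g (X ω) ∂P = ∫ ω, b' (X ω) * iz ω * g (X ω) ∂P := by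
    intro g hg hgb
    rw [hv g hg hgb]
    refine integral_congr_ae ?_
    filter_upwards [hae] with ω h
    simp only [hb'def]
    rw [← h]
  have hwpos : ∀ x, 0 < w x := fun x => lt_of_lt_of_le hε (hwε x)
  have hwne : ∀ x, w x ≠ 0 := fun x => ne_of_gt (hwpos x)
  set g' : S → ℝ := fun x => g x / w x with hg'def
  have hg'm : Measurable g' := hg.div hw
  have hg'b : ∀ x, |g' x| ≤ D / ε := by
    intro x
    rw [hg'def]; dsimp only; rw [abs_div]
    apply div_le_div₀ hD (hgD x) hε
    rw [abs_of_pos (hwpos x)]; exact hwε x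
  calc ∫ ω, b (X ω) * g (X ω) ∂P
      = ∫ ω, b' (X ω) * g (X ω) ∂P := by
        refine integral_congr_ae ?_
        filter_upwards [hae] with ω h
        simp only [hb'def]
        rw [← h]
    _ = ∫ ω, w (X ω) * (b' (X ω) * g' (X ω)) ∂P := by
        refine integral_congr_ae (ae_of_all _ fun ω => ?_)
        dsimp only
        rw [hg'def]; dsimp only
        have := hwne (X ω)
        field_simp
    _ = ∫ ω, iz ω * (b' (X ω) * g' (X ω)) ∂P :=
        (link (fun x => b' x * g' x) (hb'm.mul hg'm)
          ⟨C * (D / ε), fun x => by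
            rw [abs_mul]
            exact mul_le_mul (hb'C x) (hg'b x) (abs_nonneg _) hC⟩).symm
    _ = ∫ ω, b' (X ω) * iz ω * g' (X ω) ∂P := by
        refine integral_congr_ae (ae_of_all _ fun ω => ?_)
        dsimp only; ring
    _ = ∫ ω, W ω * iz ω * g' (X ω) ∂P := (hv' g' hg'm ⟨D / ε, hg'b⟩).symm
    _ = ∫ ω, iz ω * V ω * g' (X ω) ∂P := by
        refine integral_congr_ae (ae_of_all _ fun ω => ?_)
        dsimp only; rw [hWiz ω]
    _ = ∫ ω, w (X ω) * V ω * g' (X ω) ∂P := linkV g' hg'm ⟨D / ε, hg'b⟩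
    _ = ∫ ω, V ω * g (X ω) ∂P := by
        refine integral_congr_ae (ae_of_all _ fun ω => ?_)
        dsimp only
        rw [hg'def]; dsimp only
        have := hwne (X ω)
        field_simp


end Stmt6Aux


/-- Lemma 2, identification of the conditional LATE: for V := f ∘ X and any
measurable T0 with P(V ∈ T0, A1 > A0) > 0,
E[(m1(X)−m0(X))·1{V∈T0}] / E[(ℓ1(X)−ℓ0(X))·1{V∈T0}] = E[Y1 − Y0 | A1 > A0, V ∈ T0]. -/
theorem stmt_6
    {Ω : Type*} [MeasurableSpace Ω] (P : Measure Ω) [IsProbabilityMeasure P]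
    {S : Type*} [mS : MeasurableSpace S]
    {T : Type*} [mT : MeasurableSpace T]
    (X : Ω → S) (hX : Measurable X)
    (f : S → T) (hf : Measurable f)
    (Z A0 A1 Y0 Y1 : Ω → ℝ)
    (hZ : Measurable Z) (hA0 : Measurable A0) (hA1 : Measurable A1)
    (hY0 : Measurable Y0) (hY1 : Measurable Y1)
    (hZ01 : ∀ ω, Z ω = 0 ∨ Z ω = 1)
    (hA0_01 : ∀ ω, A0 ω = 0 ∨ A0 ω = 1)
    (hA1_01 : ∀ ω, A1 ω = 0 ∨ A1 ω = 1)
    (hY0b : ∃ C, ∀ ω, |Y0 ω| ≤ C) (hY1b : ∃ C, ∀ ω, |Y1 ω| ≤ C)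
    (A Y : Ω → ℝ)
    (hA : A = fun ω => (1 - Z ω) * A0 ω + Z ω * A1 ω)
    (hY : Y = fun ω => (1 - A ω) * Y0 ω + A ω * Y1 ω)
    (e : S → ℝ) (he : Measurable e) (ε : ℝ) (hε : 0 < ε) (hε2 : ε < 1/2)
    (hebd : ∀ x, ε ≤ e x ∧ e x ≤ 1 - ε)
    (hVe : ∀ g : S → ℝ, Measurable g → (∃ C, ∀ x, |g x| ≤ C) →
      ∫ ω, Z ω * g (X ω) ∂P = ∫ ω, e (X ω) * g (X ω) ∂P)
    (hUnconf : ∀ ψ : ℝ × ℝ × ℝ × ℝ → ℝ, Measurable ψ → (∃ C, ∀ v, |ψ v| ≤ C) →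
      ∀ g : S → ℝ, Measurable g → (∃ C, ∀ x, |g x| ≤ C) →
      ∫ ω, Z ω * ψ (A0 ω, A1 ω, Y0 ω, Y1 ω) * g (X ω) ∂P
        = ∫ ω, e (X ω) * ψ (A0 ω, A1 ω, Y0 ω, Y1 ω) * g (X ω) ∂P)
    (m0 m1 l0 l1 : S → ℝ)
    (hm0 : Measurable m0) (hm1 : Measurable m1)
    (hl0 : Measurable l0) (hl1 : Measurable l1)
    (hm0v : ∀ g : S → ℝ, Measurable g → (∃ C, ∀ x, |g x| ≤ C) →
      ∫ ω, Y ω * (if Z ω = 0 then (1:ℝ) else 0) * g (X ω) ∂P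
        = ∫ ω, m0 (X ω) * (if Z ω = 0 then (1:ℝ) else 0) * g (X ω) ∂P)
    (hm1v : ∀ g : S → ℝ, Measurable g → (∃ C, ∀ x, |g x| ≤ C) →
      ∫ ω, Y ω * (if Z ω = 1 then (1:ℝ) else 0) * g (X ω) ∂P
        = ∫ ω, m1 (X ω) * (if Z ω = 1 then (1:ℝ) else 0) * g (X ω) ∂P)
    (hl0v : ∀ g : S → ℝ, Measurable g → (∃ C, ∀ x, |g x| ≤ C) →
      ∫ ω, A ω * (if Z ω = 0 then (1:ℝ) else 0) * g (X ω) ∂P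
        = ∫ ω, l0 (X ω) * (if Z ω = 0 then (1:ℝ) else 0) * g (X ω) ∂P)
    (hl1v : ∀ g : S → ℝ, Measurable g → (∃ C, ∀ x, |g x| ≤ C) →
      ∫ ω, A ω * (if Z ω = 1 then (1:ℝ) else 0) * g (X ω) ∂P
        = ∫ ω, l1 (X ω) * (if Z ω = 1 then (1:ℝ) else 0) * g (X ω) ∂P)
    (hMono : P {ω | A0 ω ≤ A1 ω} = 1) :
    ∀ T0 : Set T, MeasurableSet T0 →
      0 < P ({ω | A1 ω = 1 ∧ A0 ω = 0} ∩ {ω | f (X ω) ∈ T0}) →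
      (∫ ω, (m1 (X ω) - m0 (X ω)) * (if f (X ω) ∈ T0 then (1:ℝ) else 0) ∂P)
        / (∫ ω, (l1 (X ω) - l0 (X ω)) * (if f (X ω) ∈ T0 then (1:ℝ) else 0) ∂P)
      = (∫ ω in {ω | A1 ω = 1 ∧ A0 ω = 0} ∩ {ω | f (X ω) ∈ T0}, (Y1 ω - Y0 ω) ∂P)
        / (P ({ω | A1 ω = 1 ∧ A0 ω = 0} ∩ {ω | f (X ω) ∈ T0})).toReal := by
    classical
  obtain ⟨C0, hC0⟩ := hY0b
  obtain ⟨C1, hC1⟩ := hY1b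
  set C : ℝ := max 1 (max C0 C1) with hCdef
  have hC1' : (1 : ℝ) ≤ C := le_max_left _ _
  have hC : (0 : ℝ) ≤ C := by linarith
  have hY0C : ∀ ω, |Y0 ω| ≤ C :=
    fun ω => (hC0 ω).trans ((le_max_left _ _).trans (le_max_right _ _))
  have hY1C : ∀ ω, |Y1 ω| ≤ C :=
    fun ω => (hC1 ω).trans ((le_max_right _ _).trans (le_max_right _ _))
  have hA0b : ∀ ω, |A0 ω| ≤ 1 := fun ω => by rcases hA0_01 ω with h | h <;> simp [h]
  have hA1b : ∀ ω, |A1 ω| ≤ 1 := fun ω => by rcases hA1_01 ω with h | h <;> simp [h]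
  have hAm : Measurable A := by
    rw [hA]; exact ((measurable_const.sub hZ).mul hA0).add (hZ.mul hA1)
  have hA01 : ∀ ω, A ω = 0 ∨ A ω = 1 := by
    intro ω
    simp only [hA]
    rcases hZ01 ω with h | h <;> rcases hA0_01 ω with h0 | h0 <;>
      rcases hA1_01 ω with h1 | h1 <;> simp [h, h0, h1]
  have hAb : ∀ ω, |A ω| ≤ 1 := fun ω => by rcases hA01 ω with h | h <;> simp [h]
  have hYm : Measurable Y := by
    rw [hY]; exact ((measurable_const.sub hAm).mul hY0).add (hAm.mul hY1)
  have hYeq : ∀ ω, Y ω = (1 - A ω) * Y0 ω + A ω * Y1 ω := fun ω => by rw [hY]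
  have hYb : ∀ ω, |Y ω| ≤ C := by
    intro ω
    rcases hA01 ω with h | h
    · have : Y ω = Y0 ω := by rw [hYeq, h]; ring
      rw [this]; exact hY0C ω
    · have : Y ω = Y1 ω := by rw [hYeq, h]; ring
      rw [this]; exact hY1C ω
  have heε : ∀ x, ε ≤ e x := fun x => (hebd x).1
  have hεlt : ∀ x, ε ≤ 1 - e x := fun x => by have := (hebd x).2; linarith
  have heb1 : ∀ x, e x ≤ 1 := fun x => by have := (hebd x).2; linarith
  have he1b1 : ∀ x, 1 - e x ≤ 1 := fun x => by have := (hebd x).1; linarith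
  have hif1 : ∀ ω, (if Z ω = 1 then (1 : ℝ) else 0) = Z ω := fun ω => by
    rcases hZ01 ω with h | h <;> simp [h]
  have hif0 : ∀ ω, (if Z ω = 0 then (1 : ℝ) else 0) = 1 - Z ω := fun ω => by
    rcases hZ01 ω with h | h <;> simp [h]
  simp only [hif1] at hm1v hl1v
  simp only [hif0] at hm0v hl0v
  have hiz0m : Measurable (fun ω => 1 - Z ω) := measurable_const.sub hZ
  have hiz0_01 : ∀ ω, (1 - Z ω) = 0 ∨ (1 - Z ω) = 1 := by
    intro ω
    rcases hZ01 ω with h | h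
    · right; rw [h]; ring
    · left; rw [h]; ring
  have hw0m : Measurable (fun x : S => 1 - e x) := measurable_const.sub he
  have hZb : ∀ ω, |Z ω| ≤ 1 := fun ω => by rcases hZ01 ω with h | h <;> simp [h]
  have heabs : ∀ x, |e x| ≤ 1 := fun x => by
    rw [abs_of_pos (lt_of_lt_of_le hε (heε x))]; exact heb1 x
  -- link for iz = 1 - Z
  have link0 : ∀ g : S → ℝ, Measurable g → (∃ D, ∀ x, |g x| ≤ D) →
      ∫ ω, (1 - Z ω) * g (X ω) ∂P = ∫ ω, (1 - e (X ω)) * g (X ω) ∂P := by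
    rintro g hg ⟨D, hD⟩
    have i1 : Integrable (fun ω => g (X ω)) P := Stmt6Aux.intble (hg.comp hX) D (fun ω => hD _)
    have i2 : Integrable (fun ω => Z ω * g (X ω)) P := by
      refine Stmt6Aux.intble (hZ.mul (hg.comp hX)) D fun ω => ?_
      rw [abs_mul]
      calc |Z ω| * |g (X ω)| ≤ 1 * |g (X ω)| :=
            mul_le_mul_of_nonneg_right (hZb ω) (abs_nonneg _)
        _ = |g (X ω)| := one_mul _
        _ ≤ D := hD _
    have i3 : Integrable (fun ω => e (X ω) * g (X ω)) P := by
      refine Stmt6Aux.intble ((he.comp hX).mul (hg.comp hX)) D fun ω => ?_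
      rw [abs_mul]
      calc |e (X ω)| * |g (X ω)| ≤ 1 * |g (X ω)| :=
            mul_le_mul_of_nonneg_right (heabs _) (abs_nonneg _)
        _ = |g (X ω)| := one_mul _
        _ ≤ D := hD _
    calc ∫ ω, (1 - Z ω) * g (X ω) ∂P
        = ∫ ω, (g (X ω) - Z ω * g (X ω)) ∂P := by
          refine integral_congr_ae (ae_of_all _ fun ω => ?_); ring
      _ = (∫ ω, g (X ω) ∂P) - ∫ ω, Z ω * g (X ω) ∂P := integral_sub i1 i2
      _ = (∫ ω, g (X ω) ∂P) - ∫ ω, e (X ω) * g (X ω) ∂P := by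
          rw [hVe g hg ⟨D, hD⟩]
      _ = ∫ ω, (g (X ω) - e (X ω) * g (X ω)) ∂P := (integral_sub i1 i3).symm
      _ = ∫ ω, (1 - e (X ω)) * g (X ω) ∂P := by
          refine integral_congr_ae (ae_of_all _ fun ω => ?_); ring
  -- link for iz = 1 - Z with ψ factor
  have link0psi : ∀ ψ : ℝ × ℝ × ℝ × ℝ → ℝ, Measurable ψ → (∃ Cp, ∀ v, |ψ v| ≤ Cp) →
      ∀ g : S → ℝ, Measurable g → (∃ D, ∀ x, |g x| ≤ D) →
      ∫ ω, (1 - Z ω) * ψ (A0 ω, A1 ω, Y0 ω, Y1 ω) * g (X ω) ∂P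
        = ∫ ω, (1 - e (X ω)) * ψ (A0 ω, A1 ω, Y0 ω, Y1 ω) * g (X ω) ∂P := by
    rintro ψ hψ ⟨Cp, hCp⟩ g hg ⟨D, hD⟩
    have hCp0 : 0 ≤ Cp := le_trans (abs_nonneg _) (hCp (0, 0, 0, 0))
    have hqm : Measurable (fun ω => ψ (A0 ω, A1 ω, Y0 ω, Y1 ω)) :=
      hψ.comp (hA0.prodMk (hA1.prodMk (hY0.prodMk hY1)))
    have hbd : ∀ ω, |ψ (A0 ω, A1 ω, Y0 ω, Y1 ω) * g (X ω)| ≤ Cp * D := by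
      intro ω
      rw [abs_mul]
      exact mul_le_mul (hCp _) (hD _) (abs_nonneg _) hCp0
    have i1 : Integrable (fun ω => ψ (A0 ω, A1 ω, Y0 ω, Y1 ω) * g (X ω)) P :=
      Stmt6Aux.intble (hqm.mul (hg.comp hX)) (Cp * D) hbd
    have i2 : Integrable (fun ω => Z ω * ψ (A0 ω, A1 ω, Y0 ω, Y1 ω) * g (X ω)) P := by
      refine Stmt6Aux.intble ((hZ.mul hqm).mul (hg.comp hX)) (Cp * D) fun ω => ?_
      have : |Z ω * ψ (A0 ω, A1 ω, Y0 ω, Y1 ω) * g (X ω)|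
          = |Z ω| * |ψ (A0 ω, A1 ω, Y0 ω, Y1 ω) * g (X ω)| := by
        rw [abs_mul, abs_mul, abs_mul]; ring
      rw [this]
      calc |Z ω| * |ψ (A0 ω, A1 ω, Y0 ω, Y1 ω) * g (X ω)|
          ≤ 1 * (Cp * D) := mul_le_mul (hZb ω) (hbd ω) (abs_nonneg _) zero_le_one
        _ = Cp * D := one_mul _
    have i3 : Integrable (fun ω => e (X ω) * ψ (A0 ω, A1 ω, Y0 ω, Y1 ω) * g (X ω)) P := by
      refine Stmt6Aux.intble (((he.comp hX).mul hqm).mul (hg.comp hX)) (Cp * D) fun ω => ?_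
      have : |e (X ω) * ψ (A0 ω, A1 ω, Y0 ω, Y1 ω) * g (X ω)|
          = |e (X ω)| * |ψ (A0 ω, A1 ω, Y0 ω, Y1 ω) * g (X ω)| := by
        rw [abs_mul, abs_mul, abs_mul]; ring
      rw [this]
      calc |e (X ω)| * |ψ (A0 ω, A1 ω, Y0 ω, Y1 ω) * g (X ω)|
          ≤ 1 * (Cp * D) := mul_le_mul (heabs _) (hbd ω) (abs_nonneg _) zero_le_one
        _ = Cp * D := one_mul _
    calc ∫ ω, (1 - Z ω) * ψ (A0 ω, A1 ω, Y0 ω, Y1 ω) * g (X ω) ∂P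
        = ∫ ω, (ψ (A0 ω, A1 ω, Y0 ω, Y1 ω) * g (X ω)
            - Z ω * ψ (A0 ω, A1 ω, Y0 ω, Y1 ω) * g (X ω)) ∂P := by
          refine integral_congr_ae (ae_of_all _ fun ω => ?_); ring
      _ = (∫ ω, ψ (A0 ω, A1 ω, Y0 ω, Y1 ω) * g (X ω) ∂P)
            - ∫ ω, Z ω * ψ (A0 ω, A1 ω, Y0 ω, Y1 ω) * g (X ω) ∂P := integral_sub i1 i2
      _ = (∫ ω, ψ (A0 ω, A1 ω, Y0 ω, Y1 ω) * g (X ω) ∂P)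
            - ∫ ω, e (X ω) * ψ (A0 ω, A1 ω, Y0 ω, Y1 ω) * g (X ω) ∂P := by
          rw [hUnconf ψ hψ ⟨Cp, hCp⟩ g hg ⟨D, hD⟩]
      _ = ∫ ω, (ψ (A0 ω, A1 ω, Y0 ω, Y1 ω) * g (X ω)
            - e (X ω) * ψ (A0 ω, A1 ω, Y0 ω, Y1 ω) * g (X ω)) ∂P := (integral_sub i1 i3).symm
      _ = ∫ ω, (1 - e (X ω)) * ψ (A0 ω, A1 ω, Y0 ω, Y1 ω) * g (X ω) ∂P := by
          refine integral_congr_ae (ae_of_all _ fun ω => ?_); ring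
  -- pointwise identities
  have hq1 : ∀ ω, Y ω * Z ω = Z ω * Stmt6Aux.psi1 C (A0 ω, A1 ω, Y0 ω, Y1 ω) := by
    intro ω
    rw [Stmt6Aux.psi1_eval (hA1b ω) (hY0C ω) (hY1C ω)]
    rcases hZ01 ω with h | h
    · rw [h]; ring
    · simp only [hY, hA, h]; ring
  have hq0 : ∀ ω, Y ω * (1 - Z ω) = (1 - Z ω) * Stmt6Aux.psi0 C (A0 ω, A1 ω, Y0 ω, Y1 ω) := by
    intro ω
    rw [Stmt6Aux.psi0_eval (hA0b ω) (hY0C ω) (hY1C ω)]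
    rcases hZ01 ω with h | h
    · simp only [hY, hA, h]; ring
    · rw [h]; ring
  have hp1 : ∀ ω, A ω * Z ω = Z ω * Stmt6Aux.phi1 (A0 ω, A1 ω, Y0 ω, Y1 ω) := by
    intro ω
    rw [Stmt6Aux.phi1_eval (hA1b ω)]
    rcases hZ01 ω with h | h
    · rw [h]; ring
    · simp only [hA, h]; ring
  have hp0 : ∀ ω, A ω * (1 - Z ω) = (1 - Z ω) * Stmt6Aux.phi0 (A0 ω, A1 ω, Y0 ω, Y1 ω) := by
    intro ω
    rw [Stmt6Aux.phi0_eval (hA0b ω)]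
    rcases hZ01 ω with h | h
    · simp only [hA, h]; ring
    · rw [h]; ring
  -- monotonicity a.e.
  have hmono_ae : ∀ᵐ ω ∂P, A0 ω ≤ A1 ω := by
    have hsm : MeasurableSet {ω | A0 ω ≤ A1 ω} := measurableSet_le hA0 hA1
    have hc : P {ω | A0 ω ≤ A1 ω}ᶜ = 0 := by
      rw [measure_compl hsm (measure_ne_top _ _), hMono, measure_univ]
      simp
    rw [ae_iff]
    rw [← Set.compl_setOf]
    exact hc
  intro T0 hT0 hpos
  set E : Set Ω := {ω | A1 ω = 1 ∧ A0 ω = 0} ∩ {ω | f (X ω) ∈ T0} with hEdef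
  have hEm : MeasurableSet E := by
    rw [hEdef]
    refine MeasurableSet.inter ?_ (hX (hf hT0))
    have : {ω | A1 ω = 1 ∧ A0 ω = 0} = A1 ⁻¹' {1} ∩ A0 ⁻¹' {0} := by
      ext ω; simp
    rw [this]
    exact (hA1 (measurableSet_singleton 1)).inter (hA0 (measurableSet_singleton 0))
  set G : S → ℝ := fun x => if f x ∈ T0 then (1 : ℝ) else 0 with hGdef
  have hGm : Measurable G := by
    rw [hGdef]
    exact Measurable.ite (hf hT0) measurable_const measurable_const
  have hGb : ∀ x, |G x| ≤ 1 := by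
    intro x; rw [hGdef]; dsimp only; split_ifs <;> norm_num
  -- four transfers
  obtain ⟨hae_m1, hI_m1⟩ := Stmt6Aux.transfer hX hYm hZ hZ01 hC hYb hm1 hm1v he hε heε heb1
    hVe hq1 (fun g' hg' hb' => hUnconf (Stmt6Aux.psi1 C) Stmt6Aux.psi1_meas
      ⟨3 * C, Stmt6Aux.psi1_bound hC⟩ g' hg' hb') hGm zero_le_one hGb
  obtain ⟨hae_m0, hI_m0⟩ := Stmt6Aux.transfer hX hYm hiz0m hiz0_01 hC hYb hm0 hm0v hw0m hε
    hεlt he1b1 link0 hq0 (fun g' hg' hb' => link0psi (Stmt6Aux.psi0 C) Stmt6Aux.psi0_meas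
      ⟨3 * C, Stmt6Aux.psi0_bound hC⟩ g' hg' hb') hGm zero_le_one hGb
  obtain ⟨hae_l1, hI_l1⟩ := Stmt6Aux.transfer hX hAm hZ hZ01 zero_le_one hAb hl1 hl1v he hε heε
    heb1 hVe hp1 (fun g' hg' hb' => hUnconf Stmt6Aux.phi1 Stmt6Aux.phi1_meas
      ⟨1, Stmt6Aux.phi1_bound⟩ g' hg' hb') hGm zero_le_one hGb
  obtain ⟨hae_l0, hI_l0⟩ := Stmt6Aux.transfer hX hAm hiz0m hiz0_01 zero_le_one hAb hl0 hl0v hw0m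
    hε hεlt he1b1 link0 hp0 (fun g' hg' hb' => link0psi Stmt6Aux.phi0 Stmt6Aux.phi0_meas
      ⟨1, Stmt6Aux.phi0_bound⟩ g' hg' hb') hGm zero_le_one hGb
  -- integrability facts
  have im1 : Integrable (fun ω => m1 (X ω) * G (X ω)) P := by
    have h1 : Integrable (fun ω => Stmt6Aux.tr C (m1 (X ω)) * G (X ω)) P := by
      refine Stmt6Aux.intble ((Stmt6Aux.tr_meas.comp (hm1.comp hX)).mul (hGm.comp hX))
        (C * 1) fun ω => ?_
      rw [abs_mul]
      exact mul_le_mul (Stmt6Aux.abs_tr_le hC _) (hGb _) (abs_nonneg _) hC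
    refine h1.congr ?_
    filter_upwards [hae_m1] with ω h
    rw [← h]
  have im0 : Integrable (fun ω => m0 (X ω) * G (X ω)) P := by
    have h1 : Integrable (fun ω => Stmt6Aux.tr C (m0 (X ω)) * G (X ω)) P := by
      refine Stmt6Aux.intble ((Stmt6Aux.tr_meas.comp (hm0.comp hX)).mul (hGm.comp hX))
        (C * 1) fun ω => ?_
      rw [abs_mul]
      exact mul_le_mul (Stmt6Aux.abs_tr_le hC _) (hGb _) (abs_nonneg _) hC
    refine h1.congr ?_
    filter_upwards [hae_m0] with ω h
    rw [← h]
  have il1 : Integrable (fun ω => l1 (X ω) * G (X ω)) P := by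
    have h1 : Integrable (fun ω => Stmt6Aux.tr 1 (l1 (X ω)) * G (X ω)) P := by
      refine Stmt6Aux.intble ((Stmt6Aux.tr_meas.comp (hl1.comp hX)).mul (hGm.comp hX))
        (1 * 1) fun ω => ?_
      rw [abs_mul]
      exact mul_le_mul (Stmt6Aux.abs_tr_le zero_le_one _) (hGb _) (abs_nonneg _) zero_le_one
    refine h1.congr ?_
    filter_upwards [hae_l1] with ω h
    rw [← h]
  have il0 : Integrable (fun ω => l0 (X ω) * G (X ω)) P := by
    have h1 : Integrable (fun ω => Stmt6Aux.tr 1 (l0 (X ω)) * G (X ω)) P := by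
      refine Stmt6Aux.intble ((Stmt6Aux.tr_meas.comp (hl0.comp hX)).mul (hGm.comp hX))
        (1 * 1) fun ω => ?_
      rw [abs_mul]
      exact mul_le_mul (Stmt6Aux.abs_tr_le zero_le_one _) (hGb _) (abs_nonneg _) zero_le_one
    refine h1.congr ?_
    filter_upwards [hae_l0] with ω h
    rw [← h]
  have hquadm : Measurable (fun ω => (A0 ω, A1 ω, Y0 ω, Y1 ω)) :=
    hA0.prodMk (hA1.prodMk (hY0.prodMk hY1))
  -- numerator
  have hnum : ∫ ω, (m1 (X ω) - m0 (X ω)) * G (X ω) ∂P = ∫ ω in E, (Y1 ω - Y0 ω) ∂P := by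
    have step1 : ∫ ω, (m1 (X ω) - m0 (X ω)) * G (X ω) ∂P
        = (∫ ω, m1 (X ω) * G (X ω) ∂P) - ∫ ω, m0 (X ω) * G (X ω) ∂P := by
      rw [← integral_sub im1 im0]
      refine integral_congr_ae (ae_of_all _ fun ω => ?_); ring
    rw [step1, hI_m1, hI_m0]
    have iV1 : Integrable (fun ω => Stmt6Aux.psi1 C (A0 ω, A1 ω, Y0 ω, Y1 ω) * G (X ω)) P := by
      refine Stmt6Aux.intble ((Stmt6Aux.psi1_meas.comp hquadm).mul (hGm.comp hX))
        (3 * C * 1) fun ω => ?_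
      rw [abs_mul]
      exact mul_le_mul (Stmt6Aux.psi1_bound hC _) (hGb _) (abs_nonneg _) (by positivity)
    have iV0 : Integrable (fun ω => Stmt6Aux.psi0 C (A0 ω, A1 ω, Y0 ω, Y1 ω) * G (X ω)) P := by
      refine Stmt6Aux.intble ((Stmt6Aux.psi0_meas.comp hquadm).mul (hGm.comp hX))
        (3 * C * 1) fun ω => ?_
      rw [abs_mul]
      exact mul_le_mul (Stmt6Aux.psi0_bound hC _) (hGb _) (abs_nonneg _) (by positivity)
    rw [← integral_sub iV1 iV0, ← integral_indicator hEm]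
    refine integral_congr_ae ?_
    filter_upwards [hmono_ae] with ω hle
    rw [Stmt6Aux.psi1_eval (hA1b ω) (hY0C ω) (hY1C ω),
      Stmt6Aux.psi0_eval (hA0b ω) (hY0C ω) (hY1C ω)]
    rcases hA0_01 ω with h0 | h0 <;> rcases hA1_01 ω with h1 | h1
    · have hnm : ω ∉ E := by
        rw [hEdef]; rintro ⟨⟨ha, -⟩, -⟩; rw [h1] at ha; norm_num at ha
      rw [Set.indicator_of_notMem hnm, h0, h1]; ring
    · by_cases hT : f (X ω) ∈ T0
      · have hmem : ω ∈ E := by rw [hEdef]; exact ⟨⟨h1, h0⟩, hT⟩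
        have hG1 : G (X ω) = 1 := by rw [hGdef]; dsimp only; rw [if_pos hT]
        rw [Set.indicator_of_mem hmem, hG1, h0, h1]; ring
      · have hnm : ω ∉ E := by rw [hEdef]; rintro ⟨-, hc⟩; exact hT hc
        have hG0 : G (X ω) = 0 := by rw [hGdef]; dsimp only; rw [if_neg hT]
        rw [Set.indicator_of_notMem hnm, hG0]; ring
    · exfalso; rw [h0, h1] at hle; linarith
    · have hnm : ω ∉ E := by
        rw [hEdef]; rintro ⟨⟨-, ha⟩, -⟩; rw [h0] at ha; norm_num at ha
      rw [Set.indicator_of_notMem hnm, h0, h1]; ring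
  -- denominator
  have hden : ∫ ω, (l1 (X ω) - l0 (X ω)) * G (X ω) ∂P = (P E).toReal := by
    have step1 : ∫ ω, (l1 (X ω) - l0 (X ω)) * G (X ω) ∂P
        = (∫ ω, l1 (X ω) * G (X ω) ∂P) - ∫ ω, l0 (X ω) * G (X ω) ∂P := by
      rw [← integral_sub il1 il0]
      refine integral_congr_ae (ae_of_all _ fun ω => ?_); ring
    rw [step1, hI_l1, hI_l0]
    have iV1 : Integrable (fun ω => Stmt6Aux.phi1 (A0 ω, A1 ω, Y0 ω, Y1 ω) * G (X ω)) P := by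
      refine Stmt6Aux.intble ((Stmt6Aux.phi1_meas.comp hquadm).mul (hGm.comp hX))
        (1 * 1) fun ω => ?_
      rw [abs_mul]
      exact mul_le_mul (Stmt6Aux.phi1_bound _) (hGb _) (abs_nonneg _) zero_le_one
    have iV0 : Integrable (fun ω => Stmt6Aux.phi0 (A0 ω, A1 ω, Y0 ω, Y1 ω) * G (X ω)) P := by
      refine Stmt6Aux.intble ((Stmt6Aux.phi0_meas.comp hquadm).mul (hGm.comp hX))
        (1 * 1) fun ω => ?_
      rw [abs_mul]
      exact mul_le_mul (Stmt6Aux.phi0_bound _) (hGb _) (abs_nonneg _) zero_le_one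
    rw [← integral_sub iV1 iV0]
    have hind : (P E).toReal = ∫ ω, E.indicator (fun _ => (1 : ℝ)) ω ∂P := by
      rw [integral_indicator_const (1 : ℝ) hEm]
      simp
      rfl
    rw [hind]
    refine integral_congr_ae ?_
    filter_upwards [hmono_ae] with ω hle
    rw [Stmt6Aux.phi1_eval (hA1b ω), Stmt6Aux.phi0_eval (hA0b ω)]
    rcases hA0_01 ω with h0 | h0 <;> rcases hA1_01 ω with h1 | h1
    · have hnm : ω ∉ E := by
        rw [hEdef]; rintro ⟨⟨ha, -⟩, -⟩; rw [h1] at ha; norm_num at ha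
      rw [Set.indicator_of_notMem hnm, h0, h1]; ring
    · by_cases hT : f (X ω) ∈ T0
      · have hmem : ω ∈ E := by rw [hEdef]; exact ⟨⟨h1, h0⟩, hT⟩
        have hG1 : G (X ω) = 1 := by rw [hGdef]; dsimp only; rw [if_pos hT]
        rw [Set.indicator_of_mem hmem, hG1, h0, h1]; ring
      · have hnm : ω ∉ E := by rw [hEdef]; rintro ⟨-, hc⟩; exact hT hc
        have hG0 : G (X ω) = 0 := by rw [hGdef]; dsimp only; rw [if_neg hT]
        rw [Set.indicator_of_notMem hnm, hG0]; ring
    · exfalso; rw [h0, h1] at hle; linarith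
    · have hnm : ω ∉ E := by
        rw [hEdef]; rintro ⟨⟨-, ha⟩, -⟩; rw [h0] at ha; norm_num at ha
      rw [Set.indicator_of_notMem hnm, h0, h1]; ring
  show (∫ ω, (m1 (X ω) - m0 (X ω)) * G (X ω) ∂P)
      / (∫ ω, (l1 (X ω) - l0 (X ω)) * G (X ω) ∂P)
    = (∫ ω in E, (Y1 ω - Y0 ω) ∂P) / (P E).toReal
  rw [hnum, hden]
end
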